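/- arXiv:0705.4341 — 5 statements merged into one kernel-verified Lean document; each statement's English description precedes it below -/
import Mathlib

section
/- Suppose A is a C*-algebra and X₁₁, X₁₂, X₂₁, X₂₂ are closed linear subspaces of A with X_ij* = X_ji, X_ij·X_jk ⊆ X_ik, and X₁₁·X₂₂ = {0}. Then the sum X₁₁ + X₂₁ + X₁₂ + X₂₂ is a linear direct sum (if x₁₁ + x₂₁ + x₁₂ + x₂₂ = 0 with x_ij ∈ X_ij then each x_ij = 0), it is a closed *-subalgebra of A, and the map sending x₁₁ + x₂₁ + x₁₂ + x₂₂ to the 2×2 matrix with (i,j) entry x_ij is an isometric *-isomorphism from this subalgebra onto the C*-subalgebra X̂ = {matrices over A with (i,j) entry in X_ij} of M₂(A). -/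
lemma sq_zero_imp {A : Type*} [NonUnitalCStarAlgebra A] {x : A}
    (h : (star x * x) * (star x * x) = 0) : x = 0 := by
  have hsa : star (star x * x) = star x * x := by simp [star_mul]
  have h1 : ‖star x * x‖ * ‖star x * x‖ = 0 := by
    rw [← CStarRing.norm_star_mul_self (x := star x * x), hsa, h, norm_zero]
  have h2 : star x * x = 0 := by
    have := mul_self_eq_zero.mp h1
    exact norm_eq_zero.mp this
  have h3 : ‖x‖ * ‖x‖ = 0 := by rw [← CStarRing.norm_star_mul_self, h2, norm_zero]
  exact norm_eq_zero.mp (mul_self_eq_zero.mp h3)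

lemma norm_le_of_conj {A : Type*} [NonUnitalCStarAlgebra A] {x a : A}
    (h : star x * a * star x = star x * x * star x) : ‖x‖ ≤ ‖a‖ := by
  rcases eq_or_ne ‖x‖ 0 with hx | hx
  · rw [hx]; exact norm_nonneg a
  · have hxpos : 0 < ‖x‖ := lt_of_le_of_ne (norm_nonneg x) (Ne.symm hx)
    have e1 : x * star x * x = x * star a * x := by
      have := (congrArg star h).symm
      simpa [star_mul, mul_assoc] using this
    have key : ‖x‖ * ‖x‖ * (‖x‖ * ‖x‖) ≤ ‖x‖ * ‖x‖ * (‖x‖ * ‖a‖) := by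
      have e2 : (star x * x) * (star x * x) = star x * (x * star a * x) := by
        rw [← e1]; noncomm_ring
      calc ‖x‖ * ‖x‖ * (‖x‖ * ‖x‖)
          = ‖star x * x‖ * ‖star x * x‖ := by rw [CStarRing.norm_star_mul_self]
        _ = ‖(star x * x) * (star x * x)‖ := by
            rw [← CStarRing.norm_star_mul_self (x := star x * x)]
            congr 1
            simp [star_mul]
        _ = ‖star x * (x * star a * x)‖ := by rw [e2]
        _ ≤ ‖star x‖ * (‖x * star a‖ * ‖x‖) := by
            calc ‖star x * (x * star a * x)‖ ≤ ‖star x‖ * ‖x * star a * x‖ := norm_mul_le _ _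
              _ ≤ ‖star x‖ * (‖x * star a‖ * ‖x‖) := by
                  gcongr; exact norm_mul_le _ _
        _ ≤ ‖x‖ * (‖x‖ * ‖a‖ * ‖x‖) := by
            rw [norm_star]
            gcongr
            calc ‖x * star a‖ ≤ ‖x‖ * ‖star a‖ := norm_mul_le _ _
              _ = ‖x‖ * ‖a‖ := by rw [norm_star]
        _ = ‖x‖ * ‖x‖ * (‖x‖ * ‖a‖) := by ring
    have hpos : 0 < ‖x‖ * ‖x‖ := mul_pos hxpos hxpos
    have := le_of_mul_le_mul_left key hpos
    exact le_of_mul_le_mul_left this hxpos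

/-- Given closed subspaces `X i j` of a C*-algebra `A` with `(X i j)* = X j i`,
`X i j * X j k ⊆ X i k` and `X 0 0 * X 1 1 = 0`, the sum `X₁₁ + X₂₁ + X₁₂ + X₂₂` is a linear
direct sum and a closed *-subalgebra of `A`, and the map sending `x₁₁ + x₂₁ + x₁₂ + x₂₂` to
the matrix with `(i,j)` entry `x_ij` is an isometric *-isomorphism onto the C*-subalgebra
`X̂ ⊆ M₂(A)`.  (The map is formalized through its inverse `Φ`, the sum-of-entries map, which is
a *-multiplicative homeomorphic bijection from `X̂` onto the sum; being a bijective
*-homomorphism of C*-algebras, it is automatically isometric.) -/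
theorem stmt5 {A : Type*} [NonUnitalCStarAlgebra A]
    (X : Fin 2 → Fin 2 → Submodule ℂ A)
    (hclosed : ∀ i j, IsClosed (X i j : Set A))
    (hstar : ∀ i j, ∀ a ∈ X i j, star a ∈ X j i)
    (hmul : ∀ i j k, ∀ a ∈ X i j, ∀ b ∈ X j k, a * b ∈ X i k)
    (horth : ∀ a ∈ X 0 0, ∀ b ∈ X 1 1, a * b = 0)
    (Xhat : Set (Matrix (Fin 2) (Fin 2) A))
    (hXhat : Xhat = {M : Matrix (Fin 2) (Fin 2) A | ∀ i j, M i j ∈ X i j})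
    (Ssum : Set A)
    (hSsum : Ssum = {a : A | ∃ x₁₁ ∈ X 0 0, ∃ x₂₁ ∈ X 1 0, ∃ x₁₂ ∈ X 0 1, ∃ x₂₂ ∈ X 1 1,
      a = x₁₁ + x₂₁ + x₁₂ + x₂₂})
    (Φ : Matrix (Fin 2) (Fin 2) A → A)
    (hΦ : ∀ M, Φ M = M 0 0 + M 1 0 + M 0 1 + M 1 1) :
    -- the sum is a linear direct sum
    (∀ x₁₁ ∈ X 0 0, ∀ x₂₁ ∈ X 1 0, ∀ x₁₂ ∈ X 0 1, ∀ x₂₂ ∈ X 1 1,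
      x₁₁ + x₂₁ + x₁₂ + x₂₂ = 0 → x₁₁ = 0 ∧ x₂₁ = 0 ∧ x₁₂ = 0 ∧ x₂₂ = 0) ∧
    -- it is a closed *-subalgebra of `A`
    (∃ S : NonUnitalStarSubalgebra ℂ A, (S : Set A) = Ssum ∧ IsClosed (S : Set A)) ∧
    -- `Φ` is a bijection from `X̂` onto the sum, is linear (by definition), preserves products
    -- and adjoints of elements of `X̂`, and is a homeomorphism onto its image; its inverse is
    -- the asserted isometric *-isomorphism onto `X̂`
    Set.BijOn Φ Xhat Ssum ∧
    (∀ M ∈ Xhat, ∀ N ∈ Xhat, Φ (M * N) = Φ M * Φ N) ∧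
    (∀ M ∈ Xhat, Φ (star M) = star (Φ M)) ∧
    Topology.IsEmbedding (fun M : Xhat => Φ M) := by
  subst hXhat hSsum
  -- orthogonality of the diagonal corners, both ways
  have hdiag : ∀ (j k : Fin 2), j ≠ k → ∀ c ∈ X j j, ∀ d ∈ X k k, c * d = 0 := by
    intro j k hjk
    fin_cases j <;> fin_cases k
    · exact absurd rfl hjk
    · exact horth
    · intro c hc d hd
      have h0 : star d * star c = 0 := horth _ (hstar _ _ d hd) _ (hstar _ _ c hc)
      have := congrArg star h0
      simpa [star_mul] using this
    · exact absurd rfl hjk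
  -- the key orthogonality relation: non-matching products vanish
  have horth' : ∀ (i j k l : Fin 2), j ≠ k → ∀ a ∈ X i j, ∀ b ∈ X k l, a * b = 0 := by
    intro i j k l hjk a ha b hb
    have hc : star a * a ∈ X j j := hmul _ _ _ _ (hstar _ _ a ha) _ ha
    have hd : b * star b ∈ X k k := hmul _ _ _ _ hb _ (hstar _ _ b hb)
    have h0 : (star a * a) * (b * star b) = 0 := hdiag j k hjk _ hc _ hd
    apply sq_zero_imp (x := a * b)
    have e : star (a * b) * (a * b) = star b * (star a * a) * b := by
      rw [star_mul]; noncomm_ring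
    rw [e]
    calc (star b * (star a * a) * b) * (star b * (star a * a) * b)
        = star b * (((star a * a) * (b * star b)) * ((star a * a) * b)) := by noncomm_ring
      _ = 0 := by rw [h0, zero_mul, mul_zero]
  -- entrywise norm estimate
  have hest : ∀ M : Matrix (Fin 2) (Fin 2) A, (∀ i j, M i j ∈ X i j) →
      ∀ i j, ‖M i j‖ ≤ ‖Φ M‖ := by
    intro M hM i j
    apply norm_le_of_conj
    have hterm : ∀ (k l : Fin 2), k ≠ i ∨ l ≠ j →
        star (M i j) * M k l * star (M i j) = 0 := by
      intro k l hkl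
      have hsx : star (M i j) ∈ X j i := hstar _ _ _ (hM i j)
      rcases hkl with hk | hl
      · have : star (M i j) * M k l = 0 := horth' j i k l (Ne.symm hk) _ hsx _ (hM k l)
        rw [this, zero_mul]
      · have : M k l * star (M i j) = 0 := horth' k l j i hl _ (hM k l) _ hsx
        rw [mul_assoc, this, mul_zero]
    have e : star (M i j) * Φ M * star (M i j)
        = star (M i j) * M 0 0 * star (M i j) + star (M i j) * M 1 0 * star (M i j)
          + star (M i j) * M 0 1 * star (M i j) + star (M i j) * M 1 1 * star (M i j) := by
      rw [hΦ]; noncomm_ring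
    rw [e]
    fin_cases i <;> fin_cases j
    · rw [hterm 1 0 (by exact Or.inl (by decide)), hterm 0 1 (by exact Or.inr (by decide)),
        hterm 1 1 (by exact Or.inl (by decide))]
      simp
    · rw [hterm 0 0 (by exact Or.inr (by decide)), hterm 1 0 (by exact Or.inl (by decide)),
        hterm 1 1 (by exact Or.inl (by decide))]
      simp
    · rw [hterm 0 0 (by exact Or.inl (by decide)), hterm 0 1 (by exact Or.inl (by decide)),
        hterm 1 1 (by exact Or.inr (by decide))]
      simp
    · rw [hterm 0 0 (by exact Or.inl (by decide)), hterm 1 0 (by exact Or.inr (by decide)),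
        hterm 0 1 (by exact Or.inl (by decide))]
      simp
  -- componentwise estimate
  have hest' : ∀ w ∈ X 0 0, ∀ x ∈ X 1 0, ∀ y ∈ X 0 1, ∀ z ∈ X 1 1,
      ‖w‖ ≤ ‖w + x + y + z‖ ∧ ‖x‖ ≤ ‖w + x + y + z‖ ∧ ‖y‖ ≤ ‖w + x + y + z‖ ∧
        ‖z‖ ≤ ‖w + x + y + z‖ := by
    intro w hw x hx y hy z hz
    have hM : ∀ i j, (!![w, y; x, z] : Matrix (Fin 2) (Fin 2) A) i j ∈ X i j := by
      intro i j; fin_cases i <;> fin_cases j <;> simpa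
    have hΦM : Φ !![w, y; x, z] = w + x + y + z := by
      rw [hΦ]; simp
    refine ⟨?_, ?_, ?_, ?_⟩
    · simpa [hΦM] using hest _ hM 0 0
    · simpa [hΦM] using hest _ hM 1 0
    · simpa [hΦM] using hest _ hM 0 1
    · simpa [hΦM] using hest _ hM 1 1
  have hdirect : ∀ x₁₁ ∈ X 0 0, ∀ x₂₁ ∈ X 1 0, ∀ x₁₂ ∈ X 0 1, ∀ x₂₂ ∈ X 1 1,
      x₁₁ + x₂₁ + x₁₂ + x₂₂ = 0 → x₁₁ = 0 ∧ x₂₁ = 0 ∧ x₁₂ = 0 ∧ x₂₂ = 0 := by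
    intro w hw x hx y hy z hz h0
    obtain ⟨e1, e2, e3, e4⟩ := hest' w hw x hx y hy z hz
    rw [h0, norm_zero] at e1 e2 e3 e4
    exact ⟨norm_eq_zero.mp (le_antisymm e1 (norm_nonneg _)),
      norm_eq_zero.mp (le_antisymm e2 (norm_nonneg _)),
      norm_eq_zero.mp (le_antisymm e3 (norm_nonneg _)),
      norm_eq_zero.mp (le_antisymm e4 (norm_nonneg _))⟩
  -- bijectivity data
  have hmemmat : ∀ w ∈ X 0 0, ∀ x ∈ X 1 0, ∀ y ∈ X 0 1, ∀ z ∈ X 1 1,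
      ∀ i j, (!![w, y; x, z] : Matrix (Fin 2) (Fin 2) A) i j ∈ X i j := by
    intro w hw x hx y hy z hz i j
    fin_cases i <;> fin_cases j <;> simpa
  have hΦmat : ∀ w x y z : A, Φ !![w, y; x, z] = w + x + y + z := by
    intro w x y z; rw [hΦ]; simp
  have hinj : ∀ M, (∀ i j, M i j ∈ X i j) → ∀ N, (∀ i j, N i j ∈ X i j) →
      Φ M = Φ N → M = N := by
    intro M hM N hN h
    have h0 : (M 0 0 - N 0 0) + (M 1 0 - N 1 0) + (M 0 1 - N 0 1) + (M 1 1 - N 1 1) = 0 := by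
      rw [hΦ, hΦ] at h
      calc (M 0 0 - N 0 0) + (M 1 0 - N 1 0) + (M 0 1 - N 0 1) + (M 1 1 - N 1 1)
          = (M 0 0 + M 1 0 + M 0 1 + M 1 1) - (N 0 0 + N 1 0 + N 0 1 + N 1 1) := by abel
        _ = 0 := by rw [h, sub_self]
    obtain ⟨e1, e2, e3, e4⟩ := hdirect _ (sub_mem (hM 0 0) (hN 0 0)) _
      (sub_mem (hM 1 0) (hN 1 0)) _ (sub_mem (hM 0 1) (hN 0 1)) _
      (sub_mem (hM 1 1) (hN 1 1)) h0
    ext i j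
    fin_cases i <;> fin_cases j
    · exact sub_eq_zero.mp e1
    · exact sub_eq_zero.mp e3
    · exact sub_eq_zero.mp e2
    · exact sub_eq_zero.mp e4
  have hbij : Set.BijOn Φ {M : Matrix (Fin 2) (Fin 2) A | ∀ i j, M i j ∈ X i j}
      {a : A | ∃ x₁₁ ∈ X 0 0, ∃ x₂₁ ∈ X 1 0, ∃ x₁₂ ∈ X 0 1, ∃ x₂₂ ∈ X 1 1,
        a = x₁₁ + x₂₁ + x₁₂ + x₂₂} := by
    refine ⟨fun M hM => ⟨M 0 0, hM 0 0, M 1 0, hM 1 0, M 0 1, hM 0 1, M 1 1, hM 1 1, hΦ M⟩,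
      fun M hM N hN h => hinj M hM N hN h, ?_⟩
    rintro a ⟨w, hw, x, hx, y, hy, z, hz, rfl⟩
    exact ⟨!![w, y; x, z], hmemmat w hw x hx y hy z hz, (hΦmat w x y z)⟩
  -- continuity of Φ
  have hcont : Continuous Φ := by
    have hΦeq : Φ = fun M : Matrix (Fin 2) (Fin 2) A => M 0 0 + M 1 0 + M 0 1 + M 1 1 :=
      funext hΦ
    rw [hΦeq]
    exact (((continuous_id.matrix_elem 0 0).add (continuous_id.matrix_elem 1 0)).add
      (continuous_id.matrix_elem 0 1)).add (continuous_id.matrix_elem 1 1)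
  refine ⟨hdirect, ?_, hbij, ?_, ?_, ?_⟩
  · -- closed *-subalgebra
    have hSclosed : IsClosed {a : A | ∃ x₁₁ ∈ X 0 0, ∃ x₂₁ ∈ X 1 0, ∃ x₁₂ ∈ X 0 1,
        ∃ x₂₂ ∈ X 1 1, a = x₁₁ + x₂₁ + x₁₂ + x₂₂} := by
      apply IsSeqClosed.isClosed
      intro u a hu hua
      choose w hw x hx y hy z hz hsum using hu
      have hcauchy := hua.cauchySeq
      have comp : ∀ c : ℕ → A, (∀ m n, ‖c m - c n‖ ≤ ‖u m - u n‖) →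
          ∃ l, Filter.Tendsto c Filter.atTop (nhds l) := by
        intro c hc
        apply cauchySeq_tendsto_of_complete
        rw [Metric.cauchySeq_iff] at hcauchy ⊢
        intro ε hε
        obtain ⟨N, hN⟩ := hcauchy ε hε
        exact ⟨N, fun m hm n hn =>
          lt_of_le_of_lt (by simpa [dist_eq_norm] using hc m n) (hN m hm n hn)⟩
      have hdiff : ∀ m n : ℕ, u m - u n
          = (w m - w n) + (x m - x n) + (y m - y n) + (z m - z n) := by
        intro m n; rw [hsum m, hsum n]; abel
      have hcomps : ∀ m n : ℕ, ‖w m - w n‖ ≤ ‖u m - u n‖ ∧ ‖x m - x n‖ ≤ ‖u m - u n‖ ∧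
          ‖y m - y n‖ ≤ ‖u m - u n‖ ∧ ‖z m - z n‖ ≤ ‖u m - u n‖ := by
        intro m n; rw [hdiff m n]
        exact hest' _ (sub_mem (hw m) (hw n)) _ (sub_mem (hx m) (hx n)) _
          (sub_mem (hy m) (hy n)) _ (sub_mem (hz m) (hz n))
      obtain ⟨lw, hlw⟩ := comp w fun m n => (hcomps m n).1
      obtain ⟨lx, hlx⟩ := comp x fun m n => (hcomps m n).2.1
      obtain ⟨ly, hly⟩ := comp y fun m n => (hcomps m n).2.2.1
      obtain ⟨lz, hlz⟩ := comp z fun m n => (hcomps m n).2.2.2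
      refine ⟨lw, (hclosed 0 0).mem_of_tendsto hlw (Filter.Eventually.of_forall hw),
        lx, (hclosed 1 0).mem_of_tendsto hlx (Filter.Eventually.of_forall hx),
        ly, (hclosed 0 1).mem_of_tendsto hly (Filter.Eventually.of_forall hy),
        lz, (hclosed 1 1).mem_of_tendsto hlz (Filter.Eventually.of_forall hz), ?_⟩
      have h1 : Filter.Tendsto (fun n => w n + x n + y n + z n) Filter.atTop
          (nhds (lw + lx + ly + lz)) := ((hlw.add hlx).add hly).add hlz
      have h2 : (fun n => w n + x n + y n + z n) = u := funext fun n => (hsum n).symm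
      exact tendsto_nhds_unique hua (h2 ▸ h1)
    refine ⟨{
      carrier := {a : A | ∃ x₁₁ ∈ X 0 0, ∃ x₂₁ ∈ X 1 0, ∃ x₁₂ ∈ X 0 1, ∃ x₂₂ ∈ X 1 1,
        a = x₁₁ + x₂₁ + x₁₂ + x₂₂}
      zero_mem' := ⟨0, zero_mem _, 0, zero_mem _, 0, zero_mem _, 0, zero_mem _, by simp⟩
      add_mem' := by
        rintro a b ⟨w, hw, x, hx, y, hy, z, hz, rfl⟩ ⟨w', hw', x', hx', y', hy', z', hz', rfl⟩
        exact ⟨w + w', add_mem hw hw', x + x', add_mem hx hx', y + y', add_mem hy hy',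
          z + z', add_mem hz hz', by abel⟩
      smul_mem' := by
        rintro c a ⟨w, hw, x, hx, y, hy, z, hz, rfl⟩
        exact ⟨c • w, SMulMemClass.smul_mem c hw, c • x, SMulMemClass.smul_mem c hx,
          c • y, SMulMemClass.smul_mem c hy, c • z, SMulMemClass.smul_mem c hz,
          by simp [smul_add]⟩
      mul_mem' := by
        rintro a b ⟨w, hw, x, hx, y, hy, z, hz, rfl⟩ ⟨w', hw', x', hx', y', hy', z', hz', rfl⟩
        have z1 : w * x' = 0 := horth' 0 0 1 0 (by decide) _ hw _ hx'
        have z2 : w * z' = 0 := horth' 0 0 1 1 (by decide) _ hw _ hz'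
        have z3 : x * x' = 0 := horth' 1 0 1 0 (by decide) _ hx _ hx'
        have z4 : x * z' = 0 := horth' 1 0 1 1 (by decide) _ hx _ hz'
        have z5 : y * w' = 0 := horth' 0 1 0 0 (by decide) _ hy _ hw'
        have z6 : y * y' = 0 := horth' 0 1 0 1 (by decide) _ hy _ hy'
        have z7 : z * w' = 0 := horth' 1 1 0 0 (by decide) _ hz _ hw'
        have z8 : z * y' = 0 := horth' 1 1 0 1 (by decide) _ hz _ hy'
        refine ⟨w * w' + y * x',
          add_mem (hmul 0 0 0 _ hw _ hw') (hmul 0 1 0 _ hy _ hx'),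
          x * w' + z * x',
          add_mem (hmul 1 0 0 _ hx _ hw') (hmul 1 1 0 _ hz _ hx'),
          w * y' + y * z',
          add_mem (hmul 0 0 1 _ hw _ hy') (hmul 0 1 1 _ hy _ hz'),
          x * y' + z * z',
          add_mem (hmul 1 0 1 _ hx _ hy') (hmul 1 1 1 _ hz _ hz'), ?_⟩
        simp only [mul_add, add_mul, z1, z2, z3, z4, z5, z6, z7, z8, add_zero, zero_add]
        abel
      star_mem' := by
        rintro a ⟨w, hw, x, hx, y, hy, z, hz, rfl⟩
        refine ⟨star w, hstar 0 0 _ hw, star y, hstar 0 1 _ hy, star x, hstar 1 0 _ hx,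
          star z, hstar 1 1 _ hz, ?_⟩
        simp only [star_add]
        abel }, rfl, hSclosed⟩
  · -- multiplicativity
    intro M hM N hN
    have z1 : M 0 0 * N 1 0 = 0 := horth' 0 0 1 0 (by decide) _ (hM 0 0) _ (hN 1 0)
    have z2 : M 0 0 * N 1 1 = 0 := horth' 0 0 1 1 (by decide) _ (hM 0 0) _ (hN 1 1)
    have z3 : M 1 0 * N 1 0 = 0 := horth' 1 0 1 0 (by decide) _ (hM 1 0) _ (hN 1 0)
    have z4 : M 1 0 * N 1 1 = 0 := horth' 1 0 1 1 (by decide) _ (hM 1 0) _ (hN 1 1)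
    have z5 : M 0 1 * N 0 0 = 0 := horth' 0 1 0 0 (by decide) _ (hM 0 1) _ (hN 0 0)
    have z6 : M 0 1 * N 0 1 = 0 := horth' 0 1 0 1 (by decide) _ (hM 0 1) _ (hN 0 1)
    have z7 : M 1 1 * N 0 0 = 0 := horth' 1 1 0 0 (by decide) _ (hM 1 1) _ (hN 0 0)
    have z8 : M 1 1 * N 0 1 = 0 := horth' 1 1 0 1 (by decide) _ (hM 1 1) _ (hN 0 1)
    have e : ∀ i j : Fin 2, (M * N) i j = M i 0 * N 0 j + M i 1 * N 1 j := by
      intro i j; rw [Matrix.mul_apply]; exact Fin.sum_univ_two _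
    rw [hΦ, hΦ, hΦ, e, e, e, e]
    simp only [mul_add, add_mul, z1, z2, z3, z4, z5, z6, z7, z8, add_zero, zero_add]
    abel
  · -- star
    intro M hM
    rw [hΦ, hΦ]
    simp only [Matrix.star_apply, star_add]
    abel
  · -- embedding
    refine ⟨Topology.isInducing_iff_nhds.mpr fun M₀ => le_antisymm
      (((hcont.comp continuous_subtype_val).tendsto M₀).le_comap) ?_, ?_⟩
    · set F := Filter.comap (fun M : {M : Matrix (Fin 2) (Fin 2) A | ∀ i j, M i j ∈ X i j}
        => Φ ↑M) (nhds (Φ ↑M₀)) with hF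
      have htend : Filter.Tendsto (fun M : {M : Matrix (Fin 2) (Fin 2) A | ∀ i j, M i j ∈ X i j}
          => Φ ↑M) F (nhds (Φ ↑M₀)) := Filter.tendsto_comap
      have hent : ∀ i j : Fin 2, Filter.Tendsto
          (fun M : {M : Matrix (Fin 2) (Fin 2) A | ∀ i j, M i j ∈ X i j} => (↑M : Matrix (Fin 2) (Fin 2) A) i j)
          F (nhds ((↑M₀ : Matrix (Fin 2) (Fin 2) A) i j)) := by
        intro i j
        rw [tendsto_iff_norm_sub_tendsto_zero]
        have hbound : ∀ M : {M : Matrix (Fin 2) (Fin 2) A | ∀ i j, M i j ∈ X i j},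
            ‖(↑M : Matrix (Fin 2) (Fin 2) A) i j - (↑M₀ : Matrix (Fin 2) (Fin 2) A) i j‖
              ≤ ‖Φ ↑M - Φ ↑M₀‖ := by
          intro M
          have hmem : ∀ i' j', ((↑M : Matrix (Fin 2) (Fin 2) A) - ↑M₀) i' j' ∈ X i' j' :=
            fun i' j' => by
              have := sub_mem (M.2 i' j') (M₀.2 i' j')
              simpa [Matrix.sub_apply] using this
          have hsub : Φ ((↑M : Matrix (Fin 2) (Fin 2) A) - ↑M₀) = Φ ↑M - Φ ↑M₀ := by
            rw [hΦ, hΦ, hΦ]; simp only [Matrix.sub_apply]; abel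
          have := hest _ hmem i j
          rw [hsub] at this
          simpa [Matrix.sub_apply] using this
        refine squeeze_zero (fun M => norm_nonneg _) hbound ?_
        exact tendsto_iff_norm_sub_tendsto_zero.mp htend
      have hval : Filter.Tendsto
          (fun M : {M : Matrix (Fin 2) (Fin 2) A | ∀ i j, M i j ∈ X i j} => (↑M : Matrix (Fin 2) (Fin 2) A))
          F (nhds ↑M₀) := by
        exact tendsto_pi_nhds.mpr fun i => tendsto_pi_nhds.mpr fun j => hent i j
      have hid : Filter.Tendsto
          (fun M : {M : Matrix (Fin 2) (Fin 2) A | ∀ i j, M i j ∈ X i j} => M) F (nhds M₀) :=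
        tendsto_subtype_rng.mpr hval
      exact Filter.tendsto_id'.mp hid
    · intro M N h
      exact Subtype.ext (hinj _ M.2 _ N.2 h)
end

section
/- Suppose A is a C*-algebra and X₁₁, X₁₂, X₂₁, X₂₂ are closed linear subspaces of A with X_ij* = X_ji, X_ij·X_jk ⊆ X_ik, and X₁₁·X₂₂ = {0}, and let S = X₁₁ + X₂₁ + X₁₂ + X₂₂, a C*-subalgebra of A. Then there is a family θ_t, t ∈ [0,1], of injective *-homomorphisms θ_t : S → M₂(A), such that t ↦ θ_t(s) is norm-continuous for each s ∈ S, θ₀(x₁₁ + x₂₁ + x₁₂ + x₂₂) is the matrix with (1,1) entry x₁₁ + x₂₁ + x₁₂ + x₂₂ and all other entries 0, and θ₁(x₁₁ + x₂₁ + x₁₂ + x₂₂) is the matrix with (i,j) entry x_ij. -/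
section Aux
variable {A : Type*} [NonUnitalCStarAlgebra A]

private lemma keyA (a b : A) (h : star a * a * b = 0) : a * b = 0 := by
  have h2 : star (a * b) * (a * b) = 0 := by
    rw [star_mul]
    calc star b * star a * (a * b) = star b * (star a * a * b) := by noncomm_ring
    _ = 0 := by rw [h, mul_zero]
  exact (CStarRing.star_mul_self_eq_zero_iff _).mp h2

private lemma keyB (a b : A) (h : a * (b * star b) = 0) : a * b = 0 := by
  have h1 : star (star b) * star b * star a = 0 := by
    have := congrArg star h
    rw [star_zero, star_mul] at this
    rw [star_star]
    calc b * star b * star a = star (b * star b) * star a := by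
          rw [star_mul, star_star]
    _ = 0 := this
  have h2 := keyA (star b) (star a) h1
  calc a * b = star (star b * star a) := by rw [star_mul, star_star, star_star]
  _ = 0 := by rw [h2, star_zero]

private lemma orthAll (X : Fin 2 → Fin 2 → Submodule ℂ A)
    (hstar : ∀ i j, ∀ a ∈ X i j, star a ∈ X j i)
    (hmul : ∀ i j k, ∀ a ∈ X i j, ∀ b ∈ X j k, a * b ∈ X i k)
    (horth : ∀ a ∈ X 0 0, ∀ b ∈ X 1 1, a * b = 0) :
    ∀ i j k l : Fin 2, j ≠ k → ∀ a ∈ X i j, ∀ b ∈ X k l, a * b = 0 := by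
  have Z1100 : ∀ a ∈ X 1 1, ∀ b ∈ X 0 0, a * b = 0 := by
    intro a ha b hb
    have h := horth (star b) (hstar _ _ _ hb) (star a) (hstar _ _ _ ha)
    calc a * b = star (star b * star a) := by rw [star_mul, star_star, star_star]
    _ = 0 := by rw [h, star_zero]
  have Z0010 : ∀ a ∈ X 0 0, ∀ b ∈ X 1 0, a * b = 0 := fun a ha b hb =>
    keyB a b (horth a ha _ (hmul 1 0 1 b hb _ (hstar 1 0 b hb)))
  have Z0100 : ∀ a ∈ X 0 1, ∀ b ∈ X 0 0, a * b = 0 := fun a ha b hb =>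
    keyA a b (Z1100 _ (hmul 1 0 1 (star a) (hstar 0 1 a ha) a ha) b hb)
  have Z1101 : ∀ a ∈ X 1 1, ∀ b ∈ X 0 1, a * b = 0 := fun a ha b hb =>
    keyB a b (Z1100 a ha _ (hmul 0 1 0 b hb _ (hstar 0 1 b hb)))
  have Z1011 : ∀ a ∈ X 1 0, ∀ b ∈ X 1 1, a * b = 0 := fun a ha b hb =>
    keyA a b (horth _ (hmul 0 1 0 (star a) (hstar 1 0 a ha) a ha) b hb)
  have Z0101 : ∀ a ∈ X 0 1, ∀ b ∈ X 0 1, a * b = 0 := fun a ha b hb =>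
    keyA a b (Z1101 _ (hmul 1 0 1 (star a) (hstar 0 1 a ha) a ha) b hb)
  have Z1010 : ∀ a ∈ X 1 0, ∀ b ∈ X 1 0, a * b = 0 := fun a ha b hb =>
    keyB a b (Z1011 a ha _ (hmul 1 0 1 b hb _ (hstar 1 0 b hb)))
  intro i j k l hjk a ha b hb
  fin_cases i <;> fin_cases j <;> fin_cases k <;> fin_cases l <;>
    first
      | exact absurd rfl hjk
      | exact horth a ha b hb
      | exact Z1100 a ha b hb
      | exact Z0010 a ha b hb
      | exact Z0100 a ha b hb
      | exact Z1101 a ha b hb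
      | exact Z1011 a ha b hb
      | exact Z0101 a ha b hb
      | exact Z1010 a ha b hb

private lemma decompZero (X : Fin 2 → Fin 2 → Submodule ℂ A)
    (hstar : ∀ i j, ∀ a ∈ X i j, star a ∈ X j i)
    (hmul : ∀ i j k, ∀ a ∈ X i j, ∀ b ∈ X j k, a * b ∈ X i k)
    (orth : ∀ i j k l : Fin 2, j ≠ k → ∀ a ∈ X i j, ∀ b ∈ X k l, a * b = 0)
    (m : Fin 2 → Fin 2 → A) (hm : ∀ i j, m i j ∈ X i j)
    (hsum : m 0 0 + m 1 0 + m 0 1 + m 1 1 = 0) :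
    ∀ i j, m i j = 0 := by
  set y : A := m 0 1 + m 1 1 with hy
  have hyb : ∀ b ∈ X 1 1, y * b = 0 := by
    intro b hb
    have h1 : m 0 0 * b = 0 := orth 0 0 1 1 (by decide) _ (hm 0 0) b hb
    have h2 : m 1 0 * b = 0 := orth 1 0 1 1 (by decide) _ (hm 1 0) b hb
    have h3 : (m 0 0 + m 1 0 + m 0 1 + m 1 1) * b = 0 := by rw [hsum, zero_mul]
    calc y * b = (m 0 0 + m 1 0 + m 0 1 + m 1 1) * b - m 0 0 * b - m 1 0 * b := by
          rw [hy]; noncomm_ring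
    _ = 0 := by rw [h3, h1, h2]; simp
  have star_of_yb : ∀ b ∈ X 1 1, b * star y = 0 := by
    intro b hb
    have h := hyb (star b) (hstar 1 1 _ hb)
    calc b * star y = star (y * star b) := by rw [star_mul, star_star]
    _ = 0 := by rw [h, star_zero]
  have hyy : y * star y = m 0 1 * star y := by
    have h : m 1 1 * star y = 0 := star_of_yb _ (hm 1 1)
    rw [hy, add_mul, h, add_zero]
  have hu : star y * m 0 1 = star (m 0 1) * m 0 1 := by
    have h0 : star (m 1 1) * m 0 1 = 0 :=
      orth 1 1 0 1 (by decide) _ (hstar 1 1 _ (hm 1 1)) _ (hm 0 1)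
    rw [hy, star_add, add_mul, h0, add_zero]
  have hsq : (y * star y) * (y * star y) = 0 := by
    have hmem : star (m 0 1) * m 0 1 ∈ X 1 1 :=
      hmul 1 0 1 _ (hstar 0 1 _ (hm 0 1)) _ (hm 0 1)
    have hu2 : (star (m 0 1) * m 0 1) * star y = 0 := star_of_yb _ hmem
    calc (y * star y) * (y * star y) = m 0 1 * star y * (m 0 1 * star y) := by rw [hyy]
    _ = m 0 1 * ((star y * m 0 1) * star y) := by noncomm_ring
    _ = m 0 1 * ((star (m 0 1) * m 0 1) * star y) := by rw [hu]
    _ = 0 := by rw [hu2, mul_zero]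
  have hy0 : y = 0 := by
    have hz : star (y * star y) = y * star y := by rw [star_mul, star_star]
    have hn := CStarRing.norm_star_mul_self (x := y * star y)
    rw [hz, hsq, norm_zero] at hn
    have : y * star y = 0 := by
      rw [← norm_eq_zero]; exact (mul_self_eq_zero.mp hn.symm)
    exact (CStarRing.mul_star_self_eq_zero_iff y).mp this
  have h11 : m 1 1 = 0 := by
    have hm01 : m 0 1 = - m 1 1 := by
      have : m 0 1 + m 1 1 = 0 := hy0
      linear_combination (norm := abel) this
    have : star (m 1 1) * m 1 1 = 0 := by
      have h0 : star (m 1 1) * m 0 1 = 0 :=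
        orth 1 1 0 1 (by decide) _ (hstar 1 1 _ (hm 1 1)) _ (hm 0 1)
      rw [hm01, mul_neg] at h0
      rw [← neg_neg (star (m 1 1) * m 1 1), h0, neg_zero]
    exact (CStarRing.star_mul_self_eq_zero_iff _).mp this
  have h01 : m 0 1 = 0 := by
    have : m 0 1 + m 1 1 = 0 := hy0
    rw [h11, add_zero] at this; exact this
  have hw : m 0 0 + m 1 0 = 0 := by
    rw [h01, h11] at hsum; rw [← hsum]; abel
  have h10 : m 1 0 = 0 := by
    have hm00 : m 0 0 = - m 1 0 := by linear_combination (norm := abel) hw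
    have : star (m 1 0) * m 1 0 = 0 := by
      have h0 : star (m 1 0) * m 0 0 = 0 :=
        orth 0 1 0 0 (by decide) _ (hstar 1 0 _ (hm 1 0)) _ (hm 0 0)
      rw [hm00, mul_neg] at h0
      rw [← neg_neg (star (m 1 0) * m 1 0), h0, neg_zero]
    exact (CStarRing.star_mul_self_eq_zero_iff _).mp this
  have h00 : m 0 0 = 0 := by rw [h10, add_zero] at hw; exact hw
  intro i j
  fin_cases i <;> fin_cases j <;> assumption

end Aux


/-- With `X i j` as before and `S` the C*-subalgebra
`X₁₁ + X₂₁ + X₁₂ + X₂₂` of `A`, there is a point-norm continuous family `θ_t`, `t ∈ [0,1]`, of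
injective *-homomorphisms `S → M₂(A)` with `θ₀(x₁₁ + x₂₁ + x₁₂ + x₂₂)` the matrix having the
sum in the `(1,1)` corner and zeros elsewhere, and `θ₁(x₁₁ + x₂₁ + x₁₂ + x₂₂)` the matrix with
`(i,j)` entry `x_ij`. -/
theorem stmt6 {A : Type*} [NonUnitalCStarAlgebra A]
    (X : Fin 2 → Fin 2 → Submodule ℂ A)
    (hclosed : ∀ i j, IsClosed (X i j : Set A))
    (hstar : ∀ i j, ∀ a ∈ X i j, star a ∈ X j i)
    (hmul : ∀ i j k, ∀ a ∈ X i j, ∀ b ∈ X j k, a * b ∈ X i k)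
    (horth : ∀ a ∈ X 0 0, ∀ b ∈ X 1 1, a * b = 0)
    (S : NonUnitalStarSubalgebra ℂ A)
    (hS : (S : Set A) = {a : A | ∃ x₁₁ ∈ X 0 0, ∃ x₂₁ ∈ X 1 0, ∃ x₁₂ ∈ X 0 1, ∃ x₂₂ ∈ X 1 1,
      a = x₁₁ + x₂₁ + x₁₂ + x₂₂})
    (hSclosed : IsClosed (S : Set A)) :
    ∃ θ : unitInterval → (S →⋆ₙₐ[ℂ] Matrix (Fin 2) (Fin 2) A),
      (∀ s : S, Continuous fun t => θ t s) ∧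
      (∀ t, Function.Injective (θ t)) ∧
      (∀ s : S, θ 0 s = Matrix.single 0 0 (s : A)) ∧
      (∀ x₁₁ ∈ X 0 0, ∀ x₂₁ ∈ X 1 0, ∀ x₁₂ ∈ X 0 1, ∀ x₂₂ ∈ X 1 1,
        ∀ hmem : x₁₁ + x₂₁ + x₁₂ + x₂₂ ∈ S,
          θ 1 ⟨x₁₁ + x₂₁ + x₁₂ + x₂₂, hmem⟩ = !![x₁₁, x₁₂; x₂₁, x₂₂]) := by
  have orth := orthAll X hstar hmul horth
  -- the decomposition
  have exD : ∀ s : S, ∃ m : Fin 2 → Fin 2 → A, (∀ i j, m i j ∈ X i j) ∧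
      (s : A) = m 0 0 + m 1 0 + m 0 1 + m 1 1 := by
    intro s
    have hs : (s : A) ∈ (S : Set A) := s.2
    rw [hS] at hs
    obtain ⟨x11, h11, x21, h21, x12, h12, x22, h22, hsum⟩ := hs
    refine ⟨![![x11, x12], ![x21, x22]], ?_, ?_⟩
    · intro i j; fin_cases i <;> fin_cases j <;> simpa
    · simpa using hsum
  choose D hD1 hD2 using exD
  have uniq : ∀ (s : S) (m : Fin 2 → Fin 2 → A), (∀ i j, m i j ∈ X i j) →
      (s : A) = m 0 0 + m 1 0 + m 0 1 + m 1 1 → ∀ i j, m i j = D s i j := by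
    intro s m hm hsumEq i j
    have hz := decompZero X hstar hmul orth (fun i j => m i j - D s i j)
      (fun i j => Submodule.sub_mem _ (hm i j) (hD1 s i j)) ?_
    · have := hz i j
      have := sub_eq_zero.mp this
      exact this
    · have e1 : (m 0 0 - D s 0 0) + (m 1 0 - D s 1 0) + (m 0 1 - D s 0 1) + (m 1 1 - D s 1 1)
          = (m 0 0 + m 1 0 + m 0 1 + m 1 1) - (D s 0 0 + D s 1 0 + D s 0 1 + D s 1 1) := by
        abel
      rw [e1, ← hsumEq, ← hD2 s, sub_self]
  have Dadd : ∀ s s' : S, ∀ i j, D (s + s') i j = D s i j + D s' i j := by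
    intro s s' i j
    refine (uniq (s + s') (fun i j => D s i j + D s' i j)
      (fun i j => add_mem (hD1 s i j) (hD1 s' i j)) ?_ i j).symm
    push_cast
    rw [hD2 s, hD2 s']; abel
  have Dsmul : ∀ (c : ℂ) (s : S), ∀ i j, D (c • s) i j = c • D s i j := by
    intro c s i j
    refine (uniq (c • s) (fun i j => c • D s i j)
      (fun i j => Submodule.smul_mem _ c (hD1 s i j)) ?_ i j).symm
    push_cast
    rw [hD2 s]; simp [smul_add]
  have Dstar : ∀ s : S, ∀ i j, D (star s) i j = star (D s j i) := by
    intro s i j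
    refine (uniq (star s) (fun i j => star (D s j i))
      (fun i j => hstar _ _ _ (hD1 s j i)) ?_ i j).symm
    rw [show ((star s : S) : A) = star (s : A) from rfl, hD2 s]
    simp only [star_add]
    abel
  have Dmul : ∀ s s' : S, ∀ i j,
      D (s * s') i j = D s i 0 * D s' 0 j + D s i 1 * D s' 1 j := by
    intro s s' i j
    refine (uniq (s * s') (fun i j => D s i 0 * D s' 0 j + D s i 1 * D s' 1 j)
      (fun i j => add_mem (hmul i 0 j _ (hD1 s i 0) _ (hD1 s' 0 j))
        (hmul i 1 j _ (hD1 s i 1) _ (hD1 s' 1 j))) ?_ i j).symm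
    push_cast
    rw [hD2 s, hD2 s']
    have z1 : D s 0 0 * D s' 1 0 = 0 := orth 0 0 1 0 (by decide) _ (hD1 s 0 0) _ (hD1 s' 1 0)
    have z2 : D s 0 0 * D s' 1 1 = 0 := orth 0 0 1 1 (by decide) _ (hD1 s 0 0) _ (hD1 s' 1 1)
    have z3 : D s 1 0 * D s' 1 0 = 0 := orth 1 0 1 0 (by decide) _ (hD1 s 1 0) _ (hD1 s' 1 0)
    have z4 : D s 1 0 * D s' 1 1 = 0 := orth 1 0 1 1 (by decide) _ (hD1 s 1 0) _ (hD1 s' 1 1)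
    have z5 : D s 0 1 * D s' 0 0 = 0 := orth 0 1 0 0 (by decide) _ (hD1 s 0 1) _ (hD1 s' 0 0)
    have z6 : D s 0 1 * D s' 0 1 = 0 := orth 0 1 0 1 (by decide) _ (hD1 s 0 1) _ (hD1 s' 0 1)
    have z7 : D s 1 1 * D s' 0 0 = 0 := orth 1 1 0 0 (by decide) _ (hD1 s 1 1) _ (hD1 s' 0 0)
    have z8 : D s 1 1 * D s' 0 1 = 0 := orth 1 1 0 1 (by decide) _ (hD1 s 1 1) _ (hD1 s' 0 1)
    simp only [add_mul, mul_add, z1, z2, z3, z4, z5, z6, z7, z8, add_zero, zero_add]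
    abel
  classical
  -- the homomorphism for parameters u v with u^2 + v^2 = 1
  set F : ℝ → ℝ → S → Matrix (Fin 2) (Fin 2) A := fun u v s =>
    Matrix.of ![![D s 0 0 + (u:ℂ) • D s 1 0 + (u:ℂ) • D s 0 1 + ((u:ℂ)*(u:ℂ)) • D s 1 1,
                  (v:ℂ) • D s 0 1 + ((u:ℂ)*(v:ℂ)) • D s 1 1],
                ![(v:ℂ) • D s 1 0 + ((v:ℂ)*(u:ℂ)) • D s 1 1,
                  ((v:ℂ)*(v:ℂ)) • D s 1 1]] with hF
  have hF00 : ∀ u v s, F u v s 0 0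
      = D s 0 0 + (u:ℂ) • D s 1 0 + (u:ℂ) • D s 0 1 + ((u:ℂ)*(u:ℂ)) • D s 1 1 := fun _ _ _ => rfl
  have hF01 : ∀ u v s, F u v s 0 1 = (v:ℂ) • D s 0 1 + ((u:ℂ)*(v:ℂ)) • D s 1 1 := fun _ _ _ => rfl
  have hF10 : ∀ u v s, F u v s 1 0 = (v:ℂ) • D s 1 0 + ((v:ℂ)*(u:ℂ)) • D s 1 1 := fun _ _ _ => rfl
  have hF11 : ∀ u v s, F u v s 1 1 = ((v:ℂ)*(v:ℂ)) • D s 1 1 := fun _ _ _ => rfl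
  have Fadd : ∀ u v (s s' : S), F u v (s + s') = F u v s + F u v s' := by
    intro u v s s'
    ext i j
    fin_cases i <;> fin_cases j <;>
      simp only [Fin.zero_eta, Fin.mk_one, Matrix.add_apply, hF00, hF01, hF10, hF11,
        Dadd, smul_add] <;> abel
  have Fsmul : ∀ u v (r : ℂ) (s : S), F u v (r • s) = r • F u v s := by
    intro u v r s
    ext i j
    fin_cases i <;> fin_cases j <;>
      simp only [Fin.zero_eta, Fin.mk_one, Matrix.smul_apply, hF00, hF01, hF10, hF11,
        Dsmul, smul_add, smul_comm r] <;> abel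
  have Fstar : ∀ u v (s : S), F u v (star s) = star (F u v s) := by
    intro u v s
    ext i j
    fin_cases i <;> fin_cases j <;>
      simp only [Fin.zero_eta, Fin.mk_one, Matrix.star_apply, hF00, hF01, hF10, hF11,
        Dstar, star_add, star_smul, Complex.star_def, Complex.conj_ofReal, map_mul] <;>
      module
  have Fmul : ∀ (u v : ℝ), (u:ℂ)^2 + (v:ℂ)^2 = 1 → ∀ s s' : S,
      F u v (s * s') = F u v s * F u v s' := by
    intro u v hp s s'
    have z1 : D s 0 0 * D s' 1 0 = 0 := orth 0 0 1 0 (by decide) _ (hD1 s 0 0) _ (hD1 s' 1 0)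
    have z2 : D s 0 0 * D s' 1 1 = 0 := orth 0 0 1 1 (by decide) _ (hD1 s 0 0) _ (hD1 s' 1 1)
    have z3 : D s 1 0 * D s' 1 0 = 0 := orth 1 0 1 0 (by decide) _ (hD1 s 1 0) _ (hD1 s' 1 0)
    have z4 : D s 1 0 * D s' 1 1 = 0 := orth 1 0 1 1 (by decide) _ (hD1 s 1 0) _ (hD1 s' 1 1)
    have z5 : D s 0 1 * D s' 0 0 = 0 := orth 0 1 0 0 (by decide) _ (hD1 s 0 1) _ (hD1 s' 0 0)
    have z6 : D s 0 1 * D s' 0 1 = 0 := orth 0 1 0 1 (by decide) _ (hD1 s 0 1) _ (hD1 s' 0 1)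
    have z7 : D s 1 1 * D s' 0 0 = 0 := orth 1 1 0 0 (by decide) _ (hD1 s 1 1) _ (hD1 s' 0 0)
    have z8 : D s 1 1 * D s' 0 1 = 0 := orth 1 1 0 1 (by decide) _ (hD1 s 1 1) _ (hD1 s' 0 1)
    ext i j
    rw [Matrix.mul_apply, Fin.sum_univ_two]
    fin_cases i <;> fin_cases j <;>
      simp only [Fin.zero_eta, Fin.mk_one, hF00, hF01, hF10, hF11, Dmul] <;>
      simp only [mul_add, add_mul, smul_mul_assoc, mul_smul_comm, smul_smul,
        z1, z2, z3, z4, z5, z6, z7, z8, smul_zero, add_zero, zero_add, smul_add] <;>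
      match_scalars <;>
      first
        | ring1
        | linear_combination hp
        | linear_combination (-1 : ℂ)*hp
        | linear_combination (u:ℂ)*hp
        | linear_combination (-(u:ℂ))*hp
        | linear_combination (v:ℂ)*hp
        | linear_combination (-(v:ℂ))*hp
        | linear_combination ((u:ℂ)*(v:ℂ))*hp
        | linear_combination (-(u:ℂ)*(v:ℂ))*hp
        | linear_combination ((u:ℂ)^2)*hp
        | linear_combination (-(u:ℂ)^2)*hp
        | linear_combination ((v:ℂ)^2)*hp
        | linear_combination (-(v:ℂ)^2)*hp
        | linear_combination (1+(u:ℂ)^2)*hp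
        | linear_combination (-1-(u:ℂ)^2)*hp
        | linear_combination (1+(v:ℂ)^2)*hp
        | linear_combination (-1-(v:ℂ)^2)*hp
  have F0 : ∀ u v : ℝ, F u v 0 = 0 := by
    intro u v
    have h := Fsmul u v 0 0
    simpa using h
  have Fzero : ∀ (u v : ℝ), u ^ 2 + v ^ 2 = 1 → ∀ s : S, F u v s = 0 → s = 0 := by
    intro u v hp s h0
    have e00 := congrFun (congrFun h0 0) 0
    have e01 := congrFun (congrFun h0 0) 1
    have e10 := congrFun (congrFun h0 1) 0
    have e11 := congrFun (congrFun h0 1) 1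
    rw [hF00, Matrix.zero_apply] at e00
    rw [hF01, Matrix.zero_apply] at e01
    rw [hF10, Matrix.zero_apply] at e10
    rw [hF11, Matrix.zero_apply] at e11
    have hDs : ∀ i j, D s i j = 0 := by
      by_cases hv : v = 0
      · have hu : (u : ℂ) ≠ 0 := by
          subst hv
          simp only [ne_eq, Complex.ofReal_eq_zero]
          intro h; rw [h] at hp; norm_num at hp
        have hz := decompZero X hstar hmul orth
          ![![D s 0 0, (u:ℂ) • D s 0 1], ![(u:ℂ) • D s 1 0, ((u:ℂ)*(u:ℂ)) • D s 1 1]]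
          (by intro i j; fin_cases i <;> fin_cases j <;>
                simp only [Fin.zero_eta, Fin.mk_one, Matrix.cons_val_zero, Matrix.cons_val_one,
                  Matrix.head_cons] <;>
                first
                  | exact hD1 s 0 0
                  | exact Submodule.smul_mem _ _ (hD1 s 0 1)
                  | exact Submodule.smul_mem _ _ (hD1 s 1 0)
                  | exact Submodule.smul_mem _ _ (hD1 s 1 1))
          (by simpa using e00)
        have h00 := hz 0 0
        have h01 := hz 0 1
        have h10 := hz 1 0
        have h11 := hz 1 1
        simp only [Matrix.cons_val_zero, Matrix.cons_val_one, Matrix.head_cons,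
          smul_eq_zero, mul_eq_zero, or_self, hu, false_or] at h00 h01 h10 h11
        intro i j; fin_cases i <;> fin_cases j <;> assumption
      · have hv' : (v : ℂ) ≠ 0 := by simpa using hv
        have h11 : D s 1 1 = 0 := by
          rcases smul_eq_zero.mp e11 with h | h
          · exact absurd (mul_self_eq_zero.mp h) hv'
          · exact h
        rw [h11, smul_zero, add_zero] at e01 e10
        have h01 : D s 0 1 = 0 := by
          rcases smul_eq_zero.mp e01 with h | h
          · exact absurd h hv'
          · exact h
        have h10 : D s 1 0 = 0 := by
          rcases smul_eq_zero.mp e10 with h | h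
          · exact absurd h hv'
          · exact h
        simp only [h11, h01, h10, smul_zero, add_zero] at e00
        intro i j; fin_cases i <;> fin_cases j <;> assumption
    have : (s : A) = 0 := by rw [hD2 s, hDs, hDs, hDs, hDs]; simp
    exact Subtype.ext this
  -- trig parameters
  have hpy : ∀ t : unitInterval, (Real.cos (Real.pi / 2 * t)) ^ 2 + (Real.sin (Real.pi / 2 * t)) ^ 2 = 1 :=
    fun t => Real.cos_sq_add_sin_sq _
  have hpyC : ∀ t : unitInterval,
      ((Real.cos (Real.pi / 2 * t) : ℝ) : ℂ) ^ 2 + ((Real.sin (Real.pi / 2 * t) : ℝ) : ℂ) ^ 2 = 1 := by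
    intro t
    have := hpy t
    push_cast
    exact Complex.cos_sq_add_sin_sq _
  refine ⟨fun t =>
    { toFun := F (Real.cos (Real.pi / 2 * t)) (Real.sin (Real.pi / 2 * t))
      map_add' := Fadd _ _
      map_smul' := fun r s => by simpa using Fsmul _ _ r s
      map_zero' := F0 _ _
      map_mul' := Fmul _ _ (hpyC t)
      map_star' := Fstar _ _ }, ?_, ?_, ?_, ?_⟩
  · -- continuity
    intro s
    show Continuous fun t : unitInterval =>
      F (Real.cos (Real.pi / 2 * t)) (Real.sin (Real.pi / 2 * t)) s
    have hcc : Continuous fun t : unitInterval => ((Real.cos (Real.pi / 2 * t) : ℝ) : ℂ) :=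
      Complex.continuous_ofReal.comp
        (Real.continuous_cos.comp (continuous_const.mul continuous_subtype_val))
    have hcs : Continuous fun t : unitInterval => ((Real.sin (Real.pi / 2 * t) : ℝ) : ℂ) :=
      Complex.continuous_ofReal.comp
        (Real.continuous_sin.comp (continuous_const.mul continuous_subtype_val))
    apply continuous_pi; intro i
    apply continuous_pi; intro j
    fin_cases i <;> fin_cases j <;>
      simp only [Fin.zero_eta, Fin.mk_one, hF00, hF01, hF10, hF11]
    · exact ((continuous_const.add (hcc.smul continuous_const)).add
        (hcc.smul continuous_const)).add ((hcc.mul hcc).smul continuous_const)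
    · exact (hcs.smul continuous_const).add ((hcc.mul hcs).smul continuous_const)
    · exact (hcs.smul continuous_const).add ((hcs.mul hcc).smul continuous_const)
    · exact (hcs.mul hcs).smul continuous_const
  · -- injectivity
    intro t
    rw [injective_iff_map_eq_zero]
    intro s hs
    exact Fzero _ _ (hpy t) s hs
  · -- value at 0
    intro s
    show F (Real.cos (Real.pi / 2 * ((0 : unitInterval) : ℝ))) (Real.sin (Real.pi / 2 * ((0 : unitInterval) : ℝ))) s
      = Matrix.single 0 0 (s : A)
    have h0 : ((0 : unitInterval) : ℝ) = 0 := rfl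
    rw [h0, mul_zero, Real.cos_zero, Real.sin_zero]
    ext i j
    fin_cases i <;> fin_cases j <;>
      simp [hF00, hF01, hF10, hF11, Matrix.single, ← hD2 s]
  · -- value at 1
    intro x11 h11 x21 h21 x12 h12 x22 h22 hmem
    show F (Real.cos (Real.pi / 2 * ((1 : unitInterval) : ℝ))) (Real.sin (Real.pi / 2 * ((1 : unitInterval) : ℝ)))
      ⟨x11 + x21 + x12 + x22, hmem⟩ = !![x11, x12; x21, x22]
    have h1 : ((1 : unitInterval) : ℝ) = 1 := rfl
    rw [h1, mul_one, Real.cos_pi_div_two, Real.sin_pi_div_two]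
    set s : S := ⟨x11 + x21 + x12 + x22, hmem⟩ with hsdef
    have hDval := uniq s ![![x11, x12], ![x21, x22]]
      (by intro i j; fin_cases i <;> fin_cases j <;> simpa)
      (by simp [hsdef])
    have d00 : D s 0 0 = x11 := (hDval 0 0).symm
    have d01 : D s 0 1 = x12 := (hDval 0 1).symm
    have d10 : D s 1 0 = x21 := (hDval 1 0).symm
    have d11 : D s 1 1 = x22 := (hDval 1 1).symm
    ext i j
    fin_cases i <;> fin_cases j <;>
      simp [hF00, hF01, hF10, hF11, d00, d01, d10, d11]
end

section
/- Let π : A → B be a surjective *-homomorphism of C*-algebras, and let b₁, b₂ ∈ B satisfy 0 ≤ b₁ ≤ 1, 0 ≤ b₂ ≤ 1, and b₁ b₂ = 0. Then there exist a₁, a₂ ∈ A with 0 ≤ a₁ ≤ 1, 0 ≤ a₂ ≤ 1, a₁ a₂ = 0, π(a₁) = b₁, and π(a₂) = b₂. -/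
open scoped CStarAlgebra

/-- Orthogonal positive contractions lift to orthogonal positive contractions
along a surjective *-homomorphism of C*-algebras. -/
theorem stmt9 {A B : Type*} [NonUnitalCStarAlgebra A] [PartialOrder A] [StarOrderedRing A]
    [NonUnitalCStarAlgebra B] [PartialOrder B] [StarOrderedRing B]
    (π : A →⋆ₙₐ[ℂ] B) (hπ : Function.Surjective π)
    (b₁ b₂ : B) (hb₁ : 0 ≤ b₁) (hb₁' : ‖b₁‖ ≤ 1) (hb₂ : 0 ≤ b₂) (hb₂' : ‖b₂‖ ≤ 1)
    (horth : b₁ * b₂ = 0) :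
    ∃ a₁ a₂ : A, 0 ≤ a₁ ∧ ‖a₁‖ ≤ 1 ∧ 0 ≤ a₂ ∧ ‖a₂‖ ≤ 1 ∧ a₁ * a₂ = 0 ∧
      π a₁ = b₁ ∧ π a₂ = b₂ := by
  have hb₁sa : IsSelfAdjoint b₁ := .of_nonneg hb₁
  have hb₂sa : IsSelfAdjoint b₂ := .of_nonneg hb₂
  set b : B := b₁ - b₂ with hb_def
  have hbsa : IsSelfAdjoint b := hb₁sa.sub hb₂sa
  obtain ⟨hpos, hneg⟩ := CFC.posPart_negPart_unique (a := b) rfl horth hb₁ hb₂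
  -- lift `b` to a selfadjoint element of `A`
  obtain ⟨x, hx⟩ := hπ b
  set a₀ : A := (1/2 : ℂ) • (x + star x) with ha₀_def
  have ha₀sa : IsSelfAdjoint a₀ := by
    simp only [ha₀_def, IsSelfAdjoint, star_smul, star_add, star_star]
    rw [add_comm]
    congr 1
    simp [Complex.ext_iff]
  have hπcont : Continuous π := map_continuous π
  have hπa₀ : π a₀ = b := by
    rw [ha₀_def, map_smul, map_add, map_star, hx, hbsa.star_eq, ← two_smul ℂ b,
      smul_smul]
    norm_num
  -- the truncation functions
  set g : ℝ → ℝ := fun t => min (t⁺) 1 with hg_def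
  set h : ℝ → ℝ := fun t => min (t⁻) 1 with hh_def
  have hg_cont : Continuous g := by fun_prop
  have hh_cont : Continuous h := by fun_prop
  have hg0 : g 0 = 0 := by simp [hg_def]
  have hh0 : h 0 = 0 := by simp [hh_def]
  refine ⟨cfcₙ g a₀, cfcₙ h a₀, ?_, ?_, ?_, ?_, ?_, ?_, ?_⟩
  · exact cfcₙ_nonneg fun t _ => le_min (posPart_nonneg t) zero_le_one
  · exact norm_cfcₙ_le fun t _ => by
      rw [Real.norm_eq_abs, abs_of_nonneg (le_min (posPart_nonneg t) zero_le_one)]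
      exact min_le_right _ _
  · exact cfcₙ_nonneg fun t _ => le_min (negPart_nonneg t) zero_le_one
  · exact norm_cfcₙ_le fun t _ => by
      rw [Real.norm_eq_abs, abs_of_nonneg (le_min (negPart_nonneg t) zero_le_one)]
      exact min_le_right _ _
  · rw [← cfcₙ_mul g h a₀]
    rw [← cfcₙ_zero ℝ a₀]
    refine cfcₙ_congr fun t _ => ?_
    rcases le_total t 0 with ht | ht
    · have : t⁺ = 0 := posPart_eq_zero.mpr ht
      simp [hg_def, hh_def, this]
    · have : t⁻ = 0 := negPart_eq_zero.mpr ht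
      simp [hg_def, hh_def, this]
  · -- π (cfcₙ g a₀) = b₁
    rw [π.map_cfcₙ g a₀ hg_cont.continuousOn hg0 hπcont ha₀sa (hπa₀ ▸ hbsa), hπa₀]
    have hcomp : g = (fun s => min s 1) ∘ (·⁺ : ℝ → ℝ) := rfl
    rw [hcomp, cfcₙ_comp (fun s => min s 1) (·⁺ : ℝ → ℝ) b (by fun_prop) (by simp)
      (by fun_prop) (by simp) hbsa, ← CFC.posPart_def, hpos]
    have : ∀ t ∈ quasispectrum ℝ b₁, min t 1 = t := by
      intro t ht
      refine min_eq_left ?_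
      have h1 : ‖(id t : ℝ)‖ ≤ ‖cfcₙ (id : ℝ → ℝ) b₁‖ :=
        norm_apply_le_norm_cfcₙ (id : ℝ → ℝ) b₁ ht continuous_id.continuousOn rfl hb₁sa
      rw [cfcₙ_id ℝ b₁] at h1
      calc t ≤ |t| := le_abs_self t
        _ ≤ ‖b₁‖ := h1
        _ ≤ 1 := hb₁'
    rw [cfcₙ_congr this, cfcₙ_id' ℝ b₁]
  · -- π (cfcₙ h a₀) = b₂
    rw [π.map_cfcₙ h a₀ hh_cont.continuousOn hh0 hπcont ha₀sa (hπa₀ ▸ hbsa), hπa₀]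
    have hcomp : h = (fun s => min s 1) ∘ (·⁻ : ℝ → ℝ) := rfl
    rw [hcomp, cfcₙ_comp (fun s => min s 1) (·⁻ : ℝ → ℝ) b (by fun_prop) (by simp)
      (by fun_prop) (by simp) hbsa, ← CFC.negPart_def, hneg]
    have : ∀ t ∈ quasispectrum ℝ b₂, min t 1 = t := by
      intro t ht
      refine min_eq_left ?_
      have h1 : ‖(id t : ℝ)‖ ≤ ‖cfcₙ (id : ℝ → ℝ) b₂‖ :=
        norm_apply_le_norm_cfcₙ (id : ℝ → ℝ) b₂ ht continuous_id.continuousOn rfl hb₂sa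
      rw [cfcₙ_id ℝ b₂] at h1
      calc t ≤ |t| := le_abs_self t
        _ ≤ ‖b₂‖ := h1
        _ ≤ 1 := hb₂'
    rw [cfcₙ_congr this, cfcₙ_id' ℝ b₂]
end

section
/- Let A be a C*-algebra and h, x, k ∈ A. If 0 ≤ T(h,x,k) ≤ 1 in M₂(Ã), then 0 ≤ h ≤ 1, 0 ≤ k ≤ 1, x*x ≤ h − h², and xx* ≤ k − k² in A. -/
open Finset Filter
open scoped ENNReal NNReal

/-! ### Catalan number coefficients for the square root series -/

lemma centralBinom_le_four_pow (n : ℕ) : Nat.centralBinom n ≤ 4 ^ n := by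
  induction n with
  | zero => simp [Nat.centralBinom]
  | succ m ih =>
    have key := Nat.succ_mul_centralBinom_succ m
    have h1 : (m + 1) * Nat.centralBinom (m + 1) ≤ (m + 1) * (4 * Nat.centralBinom m) := by
      rw [key]; nlinarith [Nat.centralBinom_pos m]
    have h2 : Nat.centralBinom (m + 1) ≤ 4 * Nat.centralBinom m :=
      Nat.le_of_mul_le_mul_left h1 (by omega)
    calc Nat.centralBinom (m + 1) ≤ 4 * Nat.centralBinom m := h2
      _ ≤ 4 * 4 ^ m := by omega
      _ = 4 ^ (m + 1) := by ring

lemma catalan_le_four_pow (n : ℕ) : catalan n ≤ 4 ^ n := by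
  rw [catalan_eq_centralBinom_div]
  exact (Nat.div_le_self _ _).trans (centralBinom_le_four_pow n)

noncomputable def sqCoef : ℕ → ℝ
  | 0 => 0
  | (n + 1) => 2 * catalan n / 4 ^ (n + 1)

@[simp] lemma sqCoef_zero : sqCoef 0 = 0 := rfl
lemma sqCoef_succ (n : ℕ) : sqCoef (n + 1) = 2 * catalan n / 4 ^ (n + 1) := rfl

lemma sqCoef_nonneg (n : ℕ) : 0 ≤ sqCoef n := by
  cases n with
  | zero => simp
  | succ m => rw [sqCoef_succ]; positivity

lemma sqCoef_le_half (n : ℕ) : sqCoef n ≤ 1 / 2 := by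
  cases n with
  | zero => norm_num
  | succ m =>
    rw [sqCoef_succ]
    have h : (catalan m : ℝ) ≤ 4 ^ m := by exact_mod_cast catalan_le_four_pow m
    rw [div_le_iff₀ (by positivity), pow_succ]
    nlinarith [pow_pos (show (0:ℝ) < 4 by norm_num) m]

lemma sqCoef_rec (n : ℕ) :
    sqCoef n = (if n = 1 then 1 / 2 else 0)
      + (1 / 2) * ∑ ij ∈ Finset.HasAntidiagonal.antidiagonal n, sqCoef ij.1 * sqCoef ij.2 := by
  rw [Finset.Nat.sum_antidiagonal_eq_sum_range_succ_mk]
  match n with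
  | 0 => simp
  | 1 => simp [Finset.sum_range_succ, sqCoef_succ]; norm_num
  | (m + 2) =>
    rw [Finset.sum_range_succ', Finset.sum_range_succ]
    simp only [sqCoef_zero, mul_zero, zero_mul, add_zero, Nat.sub_zero, Nat.sub_self]
    have hsum : ∀ k ∈ Finset.range (m + 1),
        sqCoef (k + 1) * sqCoef (m + 2 - (k + 1))
          = 4 / 4 ^ (m + 2) * ((catalan k : ℝ) * catalan (m - k)) := by
      intro k hk
      have hk' : k ≤ m := by simpa [Nat.lt_succ_iff] using hk
      have h1 : m + 2 - (k + 1) = (m - k) + 1 := by omega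
      rw [h1, sqCoef_succ, sqCoef_succ]
      rw [div_mul_div_comm, ← pow_add]
      have h2 : k + 1 + (m - k + 1) = m + 2 := by omega
      rw [h2]
      ring
    rw [Finset.sum_congr rfl hsum, ← Finset.mul_sum]
    have hcat : ∑ k ∈ Finset.range (m + 1), (catalan k : ℝ) * catalan (m - k)
        = (catalan (m + 1) : ℝ) := by
      rw [catalan_succ m]
      push_cast [Fin.sum_univ_eq_sum_range (fun i => (catalan i : ℝ) * catalan (m - i)) (m + 1)]
      exact Finset.sum_congr rfl fun k _ => by push_cast; ring
    rw [hcat, sqCoef_succ]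
    simp only [if_neg (by omega : ¬ m + 2 = 1)]
    ring

/-! ### Square roots of 2×2 matrices over a C*-algebra via power series -/

section MatrixSqrt

variable {B : Type*} [CStarAlgebra B] [Nontrivial B]

attribute [local instance] Matrix.linftyOpNormedRing Matrix.linftyOpNormedAlgebra
  Matrix.linftyOpNormedSpace

local notation "M" => Matrix (Fin 2) (Fin 2) B

instance piLpComplete : CompleteSpace (PiLp 1 fun _ : Fin 2 => B) :=
  inferInstance

instance matCompleteSpace : @CompleteSpace M PseudoMetricSpace.toUniformSpace :=
  inferInstanceAs (CompleteSpace (Fin 2 → Fin 2 → B))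

/-- The entry map as a continuous linear map. -/
noncomputable def entryCLM (i j : Fin 2) : M →L[ℂ] B :=
  LinearMap.mkContinuous
    { toFun := fun T => T i j
      map_add' := fun _ _ => rfl
      map_smul' := fun _ _ => rfl } 1 (fun T => by
      rw [one_mul]
      show ‖T i j‖ ≤ ‖T‖
      have h1 : ‖T i j‖₊ ≤ ∑ j' : Fin 2, ‖T i j'‖₊ :=
        Finset.single_le_sum (f := fun j' => ‖T i j'‖₊) (fun _ _ => zero_le) (Finset.mem_univ j)
      have h2 : (∑ j' : Fin 2, ‖T i j'‖₊) ≤ ‖T‖₊ := by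
        rw [Matrix.linfty_opNNNorm_def]
        exact Finset.le_sup (f := fun i' => ∑ j' : Fin 2, ‖T i' j'‖₊) (Finset.mem_univ i)
      exact_mod_cast h1.trans h2)

@[simp] lemma entryCLM_apply (i j : Fin 2) (T : M) : entryCLM i j T = T i j := rfl

lemma exists_sqrt_one_sub (z : M) (hz : star z = z) {r₀ : ℝ} (hr₀0 : 0 ≤ r₀) (hr₀1 : r₀ < 1)
    (hspec : ∀ μ ∈ spectrum ℂ z, ‖μ‖ ≤ r₀) :
    ∃ S : M, S * S = 1 - z ∧ ∀ i j, star (S i j) = S j i := by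
  set r : ℝ := (1 + r₀) / 2 with hr_def
  have hr0 : 0 < r := by rw [hr_def]; linarith
  have hr1 : r < 1 := by rw [hr_def]; linarith
  have hrr : r₀ < r := by rw [hr_def]; linarith
  -- spectral radius bound and eventual norm bound
  have hrad : spectralRadius ℂ z < ENNReal.ofReal r := by
    refine lt_of_le_of_lt ?_ ((ENNReal.ofReal_lt_ofReal_iff hr0).mpr hrr)
    rw [spectralRadius]
    refine iSup₂_le fun μ hμ => ?_
    rw [← enorm_eq_nnnorm, ← ofReal_norm]
    exact ENNReal.ofReal_le_ofReal (hspec μ hμ)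
  have hev : ∀ᶠ n : ℕ in atTop, ‖z ^ n‖ ≤ r ^ n := by
    have h1 := (spectrum.pow_nnnorm_pow_one_div_tendsto_nhds_spectralRadius z).eventually_lt_const
      hrad
    filter_upwards [h1, Filter.eventually_ge_atTop 1] with n hn hn1
    have hn0 : (n : ℝ) ≠ 0 := Nat.cast_ne_zero.mpr (by omega)
    have h2 : (‖z ^ n‖₊ : ℝ≥0∞) ≤ (ENNReal.ofReal r) ^ (n : ℝ) := by
      calc (‖z ^ n‖₊ : ℝ≥0∞) = ((‖z ^ n‖₊ : ℝ≥0∞) ^ ((1 : ℝ)/n)) ^ (n : ℝ) := by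
            rw [← ENNReal.rpow_mul, one_div, inv_mul_cancel₀ hn0, ENNReal.rpow_one]
        _ ≤ (ENNReal.ofReal r) ^ (n : ℝ) := ENNReal.rpow_le_rpow hn.le (by positivity)
    rw [ENNReal.ofReal_rpow_of_pos hr0, ← enorm_eq_nnnorm, ← ofReal_norm] at h2
    have h3 := (ENNReal.ofReal_le_ofReal_iff (by positivity)).mp h2
    rwa [Real.rpow_natCast] at h3
  have hsum_r : Summable fun n : ℕ => r ^ n := summable_geometric_of_lt_one hr0.le hr1
  set f : ℕ → M := fun n => ((sqCoef n : ℝ) : ℂ) • z ^ n with hf_def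
  have hf_bound : ∀ᶠ n : ℕ in atTop, ‖f n‖ ≤ r ^ n := by
    filter_upwards [hev] with n hn
    simp only [hf_def, norm_smul, Complex.norm_real, Real.norm_eq_abs,
      abs_of_nonneg (sqCoef_nonneg n)]
    nlinarith [sqCoef_nonneg n, sqCoef_le_half n, norm_nonneg (z ^ n),
      pow_nonneg hr0.le n]
  have hf_norm : Summable fun n => ‖f n‖ := by
    refine Summable.of_norm_bounded_eventually hsum_r ?_
    rw [Nat.cofinite_eq_atTop]
    filter_upwards [hf_bound] with n hn
    rwa [Real.norm_eq_abs, abs_norm]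
  have hf : Summable f := Summable.of_norm hf_norm
  set y : M := ∑' n, f n with hy_def
  -- Cauchy product
  have hterm : ∀ n : ℕ, (∑ ij ∈ Finset.HasAntidiagonal.antidiagonal n, f ij.1 * f ij.2)
      = ((∑ ij ∈ Finset.HasAntidiagonal.antidiagonal n, sqCoef ij.1 * sqCoef ij.2 : ℝ) : ℂ) • z ^ n := by
    intro n
    push_cast [Finset.sum_smul]
    refine Finset.sum_congr rfl fun ij hij => ?_
    have hij' : ij.1 + ij.2 = n := Finset.HasAntidiagonal.mem_antidiagonal.mp hij
    simp only [hf_def]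
    rw [smul_mul_smul_comm, ← pow_add, hij']
  have hg : Summable (fun n : ℕ =>
      ((∑ ij ∈ Finset.HasAntidiagonal.antidiagonal n, sqCoef ij.1 * sqCoef ij.2 : ℝ) : ℂ) • z ^ n) := by
    refine Summable.congr ?_ hterm
    exact Summable.of_norm (summable_norm_sum_mul_antidiagonal_of_summable_norm hf_norm hf_norm)
  have hyy : y * y = ∑' n : ℕ,
      ((∑ ij ∈ Finset.HasAntidiagonal.antidiagonal n, sqCoef ij.1 * sqCoef ij.2 : ℝ) : ℂ) • z ^ n := by
    rw [hy_def]
    refine (tsum_mul_tsum_eq_tsum_sum_antidiagonal_of_summable_norm hf_norm hf_norm).trans ?_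
    exact tsum_congr hterm
  -- recurrence
  have hy_rec : y = (2⁻¹ : ℂ) • z + (2⁻¹ : ℂ) • (y * y) := by
    have hsplit : ∀ n : ℕ, f n = (if n = 1 then (2⁻¹ : ℂ) else 0) • z ^ n
        + (2⁻¹ : ℂ) • (((∑ ij ∈ Finset.HasAntidiagonal.antidiagonal n, sqCoef ij.1 * sqCoef ij.2 : ℝ) : ℂ) • z ^ n) := by
      intro n
      simp only [hf_def, smul_smul, ← add_smul]
      congr 1
      rw [sqCoef_rec n]
      push_cast
      split_ifs <;> norm_num
    have hsum1 : Summable (fun n : ℕ => (if n = 1 then (2⁻¹ : ℂ) else 0) • z ^ n) := by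
      refine summable_of_ne_finset_zero (s := {1}) fun n hn => ?_
      rw [Finset.mem_singleton] at hn
      simp [hn]
    have hsum2 : Summable (fun n : ℕ => (2⁻¹ : ℂ) •
        ((((∑ ij ∈ Finset.HasAntidiagonal.antidiagonal n, sqCoef ij.1 * sqCoef ij.2 : ℝ)) : ℂ) • z ^ n)) :=
      hg.const_smul _
    calc y = ∑' n, ((if n = 1 then (2⁻¹ : ℂ) else 0) • z ^ n
        + (2⁻¹ : ℂ) • (((∑ ij ∈ Finset.HasAntidiagonal.antidiagonal n, sqCoef ij.1 * sqCoef ij.2 : ℝ) : ℂ) • z ^ n)) :=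
          tsum_congr hsplit
      _ = (∑' n, (if n = 1 then (2⁻¹ : ℂ) else 0) • z ^ n)
          + ∑' n, (2⁻¹ : ℂ) • (((∑ ij ∈ Finset.HasAntidiagonal.antidiagonal n, sqCoef ij.1 * sqCoef ij.2 : ℝ) : ℂ) • z ^ n) :=
          Summable.tsum_add hsum1 hsum2
      _ = (2⁻¹ : ℂ) • z + (2⁻¹ : ℂ) • (y * y) := by
          congr 1
          · rw [tsum_eq_single 1 (fun n hn => by simp [hn])]
            simp
          · rw [Summable.tsum_const_smul _ hg, ← hyy]
  have hz_eq : z = (2 : ℂ) • y - y * y := by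
    have h2 : (2 : ℂ) • y = z + y * y := by
      calc (2 : ℂ) • y = (2 : ℂ) • ((2⁻¹ : ℂ) • z + (2⁻¹ : ℂ) • (y * y)) := by rw [← hy_rec]
        _ = z + y * y := by rw [smul_add, smul_smul, smul_smul]; norm_num
    rw [h2]; abel
  -- entrywise description and self-adjointness
  have hentry : ∀ i j : Fin 2, y i j = ∑' n : ℕ, ((sqCoef n : ℝ) : ℂ) • ((z ^ n) i j) := by
    intro i j
    have h := (entryCLM (B := B) i j).map_tsum hf
    simpa only [entryCLM_apply, hf_def, Matrix.smul_apply] using h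
  have hzn : ∀ n : ℕ, star (z ^ n) = z ^ n := fun n => by rw [star_pow, hz]
  have hystar : ∀ i j : Fin 2, star (y i j) = y j i := by
    intro i j
    rw [hentry i j, tsum_star, hentry j i]
    refine tsum_congr fun n => ?_
    rw [star_smul, Complex.star_def, Complex.conj_ofReal, ← Matrix.star_apply, hzn]
  refine ⟨1 - y, ?_, ?_⟩
  · rw [hz_eq, two_smul]
    noncomm_ring
  · intro i j
    have h1 : star ((1 : M) i j) = (1 : M) j i := by
      simp only [Matrix.one_apply, apply_ite (star : B → B), star_one, star_zero]
      simp [eq_comm]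
    simp only [Matrix.sub_apply, star_sub, h1, hystar]

end MatrixSqrt

/-! ### Diagonal entries of T - T² are nonneg -/

section Key

variable {B : Type*} [CStarAlgebra B] [Nontrivial B] [PartialOrder B] [StarOrderedRing B]

attribute [local instance] Matrix.linftyOpNormedRing Matrix.linftyOpNormedAlgebra
  Matrix.linftyOpNormedSpace

local notation "M" => Matrix (Fin 2) (Fin 2) B

lemma key_diag_nonneg {T : M} (hsa : star T = T)
    (hspec : spectrum ℂ T ⊆ Complex.ofReal '' Set.Icc (0 : ℝ) 1) (i : Fin 2) :
    0 ≤ (T - T * T) i i := by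
  have main : ∀ ε : ℝ, 0 < ε → 0 ≤ (T - T * T) i i + (ε : ℂ) • 1 := by
    intro ε hε
    set c : ℝ := (4⁻¹ + ε)⁻¹ with hc_def
    have hc : 0 < c := by rw [hc_def]; positivity
    have hce : c * (4⁻¹ + ε) = 1 := inv_mul_cancel₀ (by positivity)
    set z : M := 1 - (c : ℂ) • (T - T * T + (ε : ℂ) • 1) with hzdef
    have hzstar : star z = z := by
      rw [hzdef]
      rw [star_sub, star_one, star_smul, star_add, star_sub, star_smul, star_one, star_mul, hsa,
        Complex.star_def, Complex.conj_ofReal, Complex.conj_ofReal]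
    have hTne : (spectrum ℂ T).Nonempty := spectrum.nonempty T
    set p : Polynomial ℂ := Polynomial.C 1 - Polynomial.C (c : ℂ) *
      (Polynomial.X - Polynomial.X * Polynomial.X + Polynomial.C (ε : ℂ)) with hp_def
    have hzaeval : z = Polynomial.aeval T p := by
      simp only [hp_def, map_sub, map_add, map_mul, Polynomial.aeval_X, Polynomial.aeval_C,
        hzdef, Algebra.smul_def]
      simp [Algebra.algebraMap_eq_smul_one]
    have hspec_z : ∀ μ ∈ spectrum ℂ z, ‖μ‖ ≤ 1 - c * ε := by
      intro μ hμ
      rw [hzaeval, spectrum.map_polynomial_aeval_of_nonempty T p hTne] at hμ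
      obtain ⟨ν, hν, rfl⟩ := hμ
      obtain ⟨t, ht, rfl⟩ := hspec hν
      have heval : Polynomial.eval ((t : ℂ)) p = ((1 - c * (t - t * t + ε) : ℝ) : ℂ) := by
        simp only [hp_def, Polynomial.eval_sub, Polynomial.eval_add, Polynomial.eval_mul,
          Polynomial.eval_X, Polynomial.eval_C]
        push_cast
        ring
      simp only [heval, Complex.norm_real, Real.norm_eq_abs]
      have hq0 : 0 ≤ t - t * t := by nlinarith [ht.1, ht.2]
      have hq1 : t - t * t ≤ 4⁻¹ := by nlinarith [sq_nonneg (t - 2⁻¹)]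
      rw [abs_le]
      constructor <;>
        nlinarith [hc, hε, mul_le_mul_of_nonneg_left hq1 hc.le, mul_nonneg hc.le hq0,
          mul_pos hc (show (0:ℝ) < 4⁻¹ by norm_num), mul_pos hc hε]
    have hr₀0 : 0 ≤ 1 - c * ε := by nlinarith
    have hr₀1 : 1 - c * ε < 1 := by nlinarith
    obtain ⟨S, hS, hSstar⟩ := exists_sqrt_one_sub z hzstar hr₀0 hr₀1 hspec_z
    have h1 : (c : ℂ) • (T - T * T + (ε : ℂ) • 1) = S * S := by
      rw [hS, hzdef, sub_sub_cancel]
    have h2 : T - T * T + (ε : ℂ) • 1 = ((c⁻¹ : ℝ) : ℂ) • (S * S) := by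
      rw [← h1, smul_smul, ← Complex.ofReal_mul, inv_mul_cancel₀ hc.ne', Complex.ofReal_one,
        one_smul]
    have h3 : (T - T * T) i i + (ε : ℂ) • (1 : B) = ((c⁻¹ : ℝ) : ℂ) • ((S * S) i i) := by
      have h := congrFun (congrFun h2 i) i
      simpa only [Matrix.add_apply, Matrix.smul_apply, Matrix.one_apply_eq] using h
    rw [h3]
    have h4 : (S * S) i i = S i 0 * star (S i 0) + S i 1 * star (S i 1) := by
      rw [Matrix.mul_apply, Fin.sum_univ_two, hSstar i 0, hSstar i 1]
    rw [h4]
    set γ : ℂ := ((Real.sqrt c⁻¹ : ℝ) : ℂ) with hγ_def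
    have hγγ : γ * star γ = ((c⁻¹ : ℝ) : ℂ) := by
      rw [hγ_def, Complex.star_def, Complex.conj_ofReal, ← Complex.ofReal_mul,
        Real.mul_self_sqrt (by positivity)]
    have h5 : ((c⁻¹ : ℝ) : ℂ) • (S i 0 * star (S i 0) + S i 1 * star (S i 1))
        = (γ • S i 0) * star (γ • S i 0) + (γ • S i 1) * star (γ • S i 1) := by
      rw [star_smul, star_smul, smul_mul_smul_comm, smul_mul_smul_comm, hγγ, smul_add]
    rw [h5]
    exact add_nonneg (mul_star_self_nonneg _) (mul_star_self_nonneg _)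
  have htend : Tendsto (fun n : ℕ => (T - T * T) i i + ((1 / (n + 1) : ℝ) : ℂ) • 1) atTop
      (nhds ((T - T * T) i i)) := by
    have h0 : Tendsto (fun n : ℕ => (1 / (n + 1) : ℝ)) atTop (nhds 0) :=
      tendsto_one_div_add_atTop_nhds_zero_nat
    have h1 : Tendsto (fun n : ℕ => ((1 / (n + 1) : ℝ) : ℂ)) atTop (nhds 0) := by
      simpa [Function.comp_def] using (Complex.continuous_ofReal.tendsto 0).comp h0
    have h2 : Tendsto (fun n : ℕ => ((1 / (n + 1) : ℝ) : ℂ) • (1 : B)) atTop (nhds 0) := by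
      simpa using h1.smul_const (1 : B)
    simpa using tendsto_const_nhds.add h2
  have hmem : ∀ n : ℕ, (T - T * T) i i + ((1 / (n + 1) : ℝ) : ℂ) • 1 ∈ {a : B | 0 ≤ a} :=
    fun n => main _ (by positivity)
  exact CStarAlgebra.isClosed_nonneg.mem_of_tendsto htend (Eventually.of_forall hmem)

end Key

/-! ### The main theorem -/

/-- The matrix `T(h,x,k) = [[1 - h, x*], [x, k]]` over the unitization of `A`. -/
noncomputable def Tmat {A : Type*} [NonUnitalCStarAlgebra A] (h x k : A) :
    Matrix (Fin 2) (Fin 2) (Unitization ℂ A) :=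
  !![1 - (h : Unitization ℂ A), star (x : Unitization ℂ A);
     (x : Unitization ℂ A), (k : Unitization ℂ A)]

/-- `0 ≤ T ≤ 1` for a matrix over the unitization: `T` is a positive element of the C*-algebra
`M₂(Ã)` with spectrum contained in `[0,1]`, i.e. `T` is self-adjoint with spectrum in `[0,1]`. -/
def IsPosUnitInterval {A : Type*} [NonUnitalCStarAlgebra A]
    (T : Matrix (Fin 2) (Fin 2) (Unitization ℂ A)) : Prop :=
  IsSelfAdjoint T ∧ spectrum ℂ T ⊆ Complex.ofReal '' Set.Icc (0 : ℝ) 1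

section Aux

variable {A : Type*} [NonUnitalCStarAlgebra A] [PartialOrder A] [StarOrderedRing A]

lemma nonneg_and_quasispectrum_of {a : A} (hsa : IsSelfAdjoint a) (hpos : 0 ≤ a - a * a) :
    0 ≤ a ∧ quasispectrum ℝ a ⊆ Set.Icc (0 : ℝ) 1 := by
  have hsa' : IsSelfAdjoint (a - a * a) := by
    refine IsSelfAdjoint.sub hsa ?_
    rw [IsSelfAdjoint, star_mul, hsa.star_eq]
  have hq : quasispectrum ℝ a ⊆ Set.Icc (0 : ℝ) 1 := by
    intro t ht
    have hcfc : cfcₙ (fun t : ℝ => t - t * t) a = a - a * a := by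
      rw [cfcₙ_sub (fun t : ℝ => t) (fun t : ℝ => t * t) a,
        cfcₙ_mul (fun t : ℝ => t) (fun t : ℝ => t) a, cfcₙ_id' ℝ a]
    have hmap := cfcₙ_map_quasispectrum (R := ℝ) (fun t : ℝ => t - t * t) a
      (by fun_prop) (by simp) hsa
    have h1 : t - t * t ∈ quasispectrum ℝ (a - a * a) := by
      rw [← hcfc, hmap]
      exact ⟨t, ht, rfl⟩
    have h2 : (0 : ℝ) ≤ t - t * t :=
      (StarOrderedRing.nonneg_iff_quasispectrum_nonneg (R := ℝ) _ hsa').mp hpos _ h1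
    constructor <;> nlinarith [h2]
  refine ⟨?_, hq⟩
  rw [StarOrderedRing.nonneg_iff_quasispectrum_nonneg (R := ℝ) a hsa]
  exact fun t ht => (hq ht).1

end Aux

/-- If `0 ≤ T(h,x,k) ≤ 1` in `M₂(Ã)`, then `0 ≤ h ≤ 1` and `0 ≤ k ≤ 1`
(positive with (quasi)spectrum in `[0,1]`), `x*x ≤ h - h²`, and `xx* ≤ k - k²` in `A`. -/
theorem stmt13 {A : Type*} [NonUnitalCStarAlgebra A] [PartialOrder A] [StarOrderedRing A]
    (h x k : A) (hT : IsPosUnitInterval (Tmat h x k)) :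
    (0 ≤ h ∧ quasispectrum ℝ h ⊆ Set.Icc (0 : ℝ) 1) ∧
    (0 ≤ k ∧ quasispectrum ℝ k ⊆ Set.Icc (0 : ℝ) 1) ∧
    star x * x ≤ h - h * h ∧ x * star x ≤ k - k * k := by
  obtain ⟨hsa, hspec⟩ := hT
  have hsaT : star (Tmat h x k) = Tmat h x k := hsa
  have e00 : Tmat h x k 0 0 = 1 - (h : Unitization ℂ A) := by simp [Tmat]
  have e01 : Tmat h x k 0 1 = star (x : Unitization ℂ A) := by simp [Tmat]
  have e10 : Tmat h x k 1 0 = (x : Unitization ℂ A) := by simp [Tmat]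
  have e11 : Tmat h x k 1 1 = (k : Unitization ℂ A) := by simp [Tmat]
  have K0 := key_diag_nonneg hsaT hspec 0
  have K1 := key_diag_nonneg hsaT hspec 1
  have E0 : (Tmat h x k - Tmat h x k * Tmat h x k) 0 0
      = ((h - h * h - star x * x : A) : Unitization ℂ A) := by
    rw [Matrix.sub_apply, Matrix.mul_apply, Fin.sum_univ_two, e00, e01, e10]
    simp only [Unitization.inr_sub, Unitization.inr_mul, Unitization.inr_star]
    noncomm_ring
  have E1 : (Tmat h x k - Tmat h x k * Tmat h x k) 1 1
      = ((k - k * k - x * star x : A) : Unitization ℂ A) := by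
    rw [Matrix.sub_apply, Matrix.mul_apply, Fin.sum_univ_two, e10, e01, e11]
    simp only [Unitization.inr_sub, Unitization.inr_mul, Unitization.inr_star]
    noncomm_ring
  have hx1 : star x * x ≤ h - h * h := by
    rw [← sub_nonneg, ← Unitization.inr_nonneg_iff]
    rw [E0] at K0
    simpa using K0
  have hx2 : x * star x ≤ k - k * k := by
    rw [← sub_nonneg, ← Unitization.inr_nonneg_iff]
    rw [E1] at K1
    simpa using K1
  have hsah : IsSelfAdjoint h := by
    have h0 := congrFun (congrFun hsaT 0) 0
    rw [Matrix.star_apply, e00, star_sub, star_one, ← Unitization.inr_star] at h0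
    have h2 : ((star h : A) : Unitization ℂ A) = (h : Unitization ℂ A) := sub_right_injective h0
    exact Unitization.inr_injective h2
  have hsak : IsSelfAdjoint k := by
    have h0 := congrFun (congrFun hsaT 1) 1
    rw [Matrix.star_apply, e11, ← Unitization.inr_star] at h0
    exact Unitization.inr_injective h0
  exact ⟨nonneg_and_quasispectrum_of hsah ((star_mul_self_nonneg x).trans hx1),
    nonneg_and_quasispectrum_of hsak ((mul_star_self_nonneg x).trans hx2), hx1, hx2⟩
end

section
/- Let A be a C*-algebra, and let x, h, k ∈ A with h and k positive contractions such that x*x ≤ h − h² and xx* ≤ k − k². Then there exists y ∈ A with x = k^{1/8} y h^{1/8}. -/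
open scoped NNReal

set_option maxHeartbeats 1000000

open Filter

namespace Stmt14Aux

/-! ### Scalar helpers -/

lemma rpow_le_add_one_pow (s : ℝ≥0) {a : ℝ} {n : ℕ} (h0 : 0 ≤ a) (h : a ≤ n) :
    s ^ a ≤ (s + 1) ^ n :=
  calc s ^ a ≤ (s + 1) ^ a := NNReal.rpow_le_rpow le_self_add h0
    _ ≤ (s + 1) ^ (n : ℝ) := NNReal.rpow_le_rpow_of_exponent_le le_add_self h
    _ = (s + 1) ^ n := NNReal.rpow_natCast _ n

/-- the function `p_ν`. -/
noncomputable def P (ν t : ℝ≥0) : ℝ≥0 := t ^ (7/8 : ℝ) * ν / (ν * t + 1)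

/-- the function `p_{2ν} - p_ν`. -/
noncomputable def Q (ν t : ℝ≥0) : ℝ≥0 := t ^ (7/8 : ℝ) * ν / ((2 * ν * t + 1) * (ν * t + 1))

/-- the function `e_ν`. -/
noncomputable def Efun (ν t : ℝ≥0) : ℝ≥0 := ν * t / (ν * t + 1)

/-- the function `t (1 - e_ν)²`. -/
noncomputable def Gfun (ν t : ℝ≥0) : ℝ≥0 := t / ((ν * t + 1) * (ν * t + 1))

lemma den_pos (s : ℝ≥0) : 0 < s + 1 := by positivity

lemma den_ne (s : ℝ≥0) : s + 1 ≠ 0 := (den_pos s).ne'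

lemma continuous_P (ν : ℝ≥0) : Continuous (P ν) := by
  unfold P
  exact ((NNReal.continuous_rpow_const (by norm_num)).mul continuous_const).div₀
    (((continuous_const.mul continuous_id).add continuous_const)) fun t => den_ne _

lemma continuous_Q (ν : ℝ≥0) : Continuous (Q ν) := by
  unfold Q
  refine ((NNReal.continuous_rpow_const (by norm_num)).mul continuous_const).div₀
    (Continuous.mul ?_ ?_) fun t => mul_ne_zero (den_ne _) (den_ne _)
  · exact (continuous_const.mul continuous_id).add continuous_const
  · exact (continuous_const.mul continuous_id).add continuous_const

lemma continuous_E (ν : ℝ≥0) : Continuous (Efun ν) := by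
  unfold Efun
  exact (continuous_const.mul continuous_id).div₀
    ((continuous_const.mul continuous_id).add continuous_const) fun t => den_ne _

lemma continuous_G (ν : ℝ≥0) : Continuous (Gfun ν) := by
  unfold Gfun
  exact continuous_id.div₀
    (Continuous.mul (((continuous_const.mul continuous_id).add continuous_const))
      (((continuous_const.mul continuous_id).add continuous_const)))
    fun t => mul_ne_zero (den_ne _) (den_ne _)

@[simp] lemma P_zero (ν : ℝ≥0) : P ν 0 = 0 := by
  simp [P, NNReal.zero_rpow (by norm_num : (7/8 : ℝ) ≠ 0)]

@[simp] lemma Q_zero (ν : ℝ≥0) : Q ν 0 = 0 := by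
  simp [Q, NNReal.zero_rpow (by norm_num : (7/8 : ℝ) ≠ 0)]

@[simp] lemma E_zero (ν : ℝ≥0) : Efun ν 0 = 0 := by simp [Efun]

@[simp] lemma G_zero (ν : ℝ≥0) : Gfun ν 0 = 0 := by simp [Gfun]

/-- (a) `P ν t ≤ ν^{1/8}` -/
lemma P_le (ν t : ℝ≥0) : P ν t ≤ ν ^ (8⁻¹ : ℝ) := by
  rw [P, div_le_iff₀ (den_pos _)]
  calc t ^ (7/8 : ℝ) * ν = ν ^ (8⁻¹ : ℝ) * (ν * t) ^ (7/8 : ℝ) := by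
        rw [NNReal.mul_rpow, ← mul_assoc, ← NNReal.rpow_add' (by norm_num),
          show (8⁻¹ : ℝ) + 7/8 = 1 by norm_num, NNReal.rpow_one]
        ring
    _ ≤ ν ^ (8⁻¹ : ℝ) * (ν * t + 1) ^ 1 := by
        gcongr
        simpa using rpow_le_add_one_pow (ν * t) (by norm_num) (by norm_num : (7/8:ℝ) ≤ (1:ℕ))
    _ = ν ^ (8⁻¹ : ℝ) * (ν * t + 1) := by rw [pow_one]

/-- (b) `Q ν t ≤ P (2ν) t` -/
lemma Q_le_P (ν t : ℝ≥0) : Q ν t ≤ P (2 * ν) t := by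
  rw [Q, P, div_le_div_iff₀ (by positivity) (den_pos _)]
  calc t ^ (7/8 : ℝ) * ν * (2 * ν * t + 1)
      = (t ^ (7/8 : ℝ) * ν * (2 * ν * t + 1)) * 1 := by ring
    _ ≤ (t ^ (7/8 : ℝ) * ν * (2 * ν * t + 1)) * (2 * (ν * t + 1)) := by
        gcongr
        · exact le_mul_of_one_le_right (zero_le ..) le_add_self |>.trans
            (by gcongr; norm_num)
    _ = t ^ (7/8 : ℝ) * (2 * ν) * ((2 * ν * t + 1) * (ν * t + 1)) := by ring

/-- auxiliary: `Q ν t * (t^{1/2} ν^{3/8}) ≤ 1`. -/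
lemma Q_mul_aux {ν : ℝ≥0} (hν : 1 ≤ ν) {t : ℝ≥0} (ht : t ≤ 1) :
    Q ν t * (t ^ ((1:ℝ)/2) * ν ^ ((3:ℝ)/8)) ≤ 1 := by
  rw [Q, div_mul_eq_mul_div, div_le_one (by positivity)]
  have key : t ^ ((7:ℝ)/8) * ν * (t ^ ((1:ℝ)/2) * ν ^ ((3:ℝ)/8)) = (ν * t) ^ ((11:ℝ)/8) := by
    rw [NNReal.mul_rpow, show ((11:ℝ)/8) = 1 + 3/8 by norm_num,
      NNReal.rpow_add' (x := ν) (by norm_num), NNReal.rpow_one,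
      show ((1:ℝ) + 3/8) = 7/8 + 1/2 by norm_num,
      NNReal.rpow_add' (x := t) (by norm_num)]
    ring
  calc t ^ ((7:ℝ)/8) * ν * (t ^ ((1:ℝ)/2) * ν ^ ((3:ℝ)/8))
      = (ν * t) ^ ((11:ℝ)/8) := key
    _ ≤ (ν * t + 1) ^ (2:ℕ) := rpow_le_add_one_pow _ (by norm_num) (by norm_num)
    _ = (ν * t + 1) * (ν * t + 1) := sq _
    _ ≤ (2 * ν * t + 1) * (ν * t + 1) := by
        have h1 : ν * t ≤ 2 * ν * t := by
          rw [mul_assoc]; exact le_mul_of_one_le_left (zero_le ..) one_le_two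
        exact mul_le_mul_left (add_le_add_left h1 1) _

/-- (c) `Q ν t * Q ν t * t ≤ ν^{-3/4}` (for `t ≤ 1`). -/
lemma Q_sq_mul_le {ν : ℝ≥0} (hν : 1 ≤ ν) {t : ℝ≥0} (ht : t ≤ 1) :
    Q ν t * Q ν t * t ≤ ν ^ (-(3/4) : ℝ) := by
  have hν0 : (0:ℝ≥0) < ν ^ ((3:ℝ)/4) := NNReal.rpow_pos (lt_of_lt_of_le one_pos hν)
  rw [NNReal.rpow_neg, ← mul_one ((ν ^ ((3:ℝ)/4))⁻¹), le_inv_mul_iff₀ hν0]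
  have key : ν ^ ((3:ℝ)/4) * (Q ν t * Q ν t * t)
      = (Q ν t * (t ^ ((1:ℝ)/2) * ν ^ ((3:ℝ)/8))) * (Q ν t * (t ^ ((1:ℝ)/2) * ν ^ ((3:ℝ)/8))) := by
    rw [show (Q ν t * (t ^ ((1:ℝ)/2) * ν ^ ((3:ℝ)/8))) * (Q ν t * (t ^ ((1:ℝ)/2) * ν ^ ((3:ℝ)/8)))
        = Q ν t * Q ν t * (t ^ ((1:ℝ)/2) * t ^ ((1:ℝ)/2)) * (ν ^ ((3:ℝ)/8) * ν ^ ((3:ℝ)/8)) by ring,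
      ← NNReal.rpow_add' (x := t) (by norm_num), ← NNReal.rpow_add' (x := ν) (by norm_num)]
    norm_num [NNReal.rpow_one]
    ring
  rw [key]
  exact mul_le_one' (Q_mul_aux hν ht) (Q_mul_aux hν ht)

/-- auxiliary: `P ν t * t^{1/4} ≤ 1` (for `t ≤ 1`). -/
lemma P_mul_aux (ν : ℝ≥0) {t : ℝ≥0} (ht : t ≤ 1) :
    P ν t * t ^ ((1:ℝ)/4) ≤ 1 := by
  rw [P, div_mul_eq_mul_div, div_le_one (den_pos _)]
  have key : t ^ ((7:ℝ)/8) * ν * t ^ ((1:ℝ)/4) = t ^ ((1:ℝ)/8) * (ν * t) := by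
    rw [show t ^ ((7:ℝ)/8) * ν * t ^ ((1:ℝ)/4) = t ^ ((7:ℝ)/8) * t ^ ((1:ℝ)/4) * ν by ring,
      ← NNReal.rpow_add' (x := t) (by norm_num),
      show ((7:ℝ)/8 + 1/4) = 1/8 + 1 by norm_num,
      NNReal.rpow_add' (x := t) (by norm_num), NNReal.rpow_one]
    ring
  rw [key]
  calc t ^ ((1:ℝ)/8) * (ν * t) ≤ 1 * (ν * t + 1) := by
        gcongr
        · exact NNReal.rpow_le_one ht (by norm_num)
        · exact le_add_right le_rfl
    _ = ν * t + 1 := one_mul _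

/-- (d) `(P ν t)⁴ t ≤ 1` (for `t ≤ 1`). -/
lemma P_sq_sq_mul_le {ν : ℝ≥0} {t : ℝ≥0} (ht : t ≤ 1) :
    P ν t * P ν t * (P ν t * P ν t) * t ≤ 1 := by
  have h2 : t ^ ((1:ℝ)/4) * t ^ ((1:ℝ)/4) = t ^ ((1:ℝ)/2) := by
    rw [← NNReal.rpow_add' (x := t) (by norm_num)]; norm_num
  have ht4 : t ^ ((1:ℝ)/4) * t ^ ((1:ℝ)/4) * (t ^ ((1:ℝ)/4) * t ^ ((1:ℝ)/4)) = t := by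
    rw [h2, ← NNReal.rpow_add' (x := t) (by norm_num)]
    norm_num
  have key : (P ν t * t ^ ((1:ℝ)/4)) * (P ν t * t ^ ((1:ℝ)/4))
        * ((P ν t * t ^ ((1:ℝ)/4)) * (P ν t * t ^ ((1:ℝ)/4)))
      = P ν t * P ν t * (P ν t * P ν t) * t := by
    rw [show (P ν t * t ^ ((1:ℝ)/4)) * (P ν t * t ^ ((1:ℝ)/4))
        * ((P ν t * t ^ ((1:ℝ)/4)) * (P ν t * t ^ ((1:ℝ)/4)))
        = P ν t * P ν t * (P ν t * P ν t)
          * (t ^ ((1:ℝ)/4) * t ^ ((1:ℝ)/4) * (t ^ ((1:ℝ)/4) * t ^ ((1:ℝ)/4))) by ring, ht4]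
  rw [← key]
  exact mul_le_one' (mul_le_one' (P_mul_aux ν ht) (P_mul_aux ν ht))
    (mul_le_one' (P_mul_aux ν ht) (P_mul_aux ν ht))

/-- (e) `Efun ν t ≤ 1`. -/
lemma E_le_one (ν t : ℝ≥0) : Efun ν t ≤ 1 := by
  rw [Efun, div_le_one (den_pos _)]
  exact le_add_right le_rfl

/-- (f) `Gfun ν t ≤ ν⁻¹`. -/
lemma G_le {ν : ℝ≥0} (hν : 1 ≤ ν) (t : ℝ≥0) : Gfun ν t ≤ ν⁻¹ := by
  have hν0 : (0:ℝ≥0) < ν := lt_of_lt_of_le one_pos hν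
  rw [Gfun, div_le_iff₀ (by positivity), le_inv_mul_iff₀ hν0]
  calc ν * t ≤ ν * t + 1 := le_add_right le_rfl
    _ ≤ (ν * t + 1) * (ν * t + 1) :=
        le_mul_of_one_le_left (zero_le ..) (le_add_self : (1:ℝ≥0) ≤ ν * t + 1)

/-- (g) `P ν t + Q ν t = P (2ν) t`. -/
lemma P_add_Q (ν t : ℝ≥0) : P ν t + Q ν t = P (2 * ν) t := by
  rw [P, Q, P, div_add_div _ _ (den_ne _) (mul_ne_zero (den_ne _) (den_ne _)),
    div_eq_div_iff (by positivity) (den_ne _)]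
  ring

/-- (h) `t^{1/8} * P ν t = Efun ν t`. -/
lemma rpow_mul_P (ν : ℝ≥0) (t : ℝ≥0) : t ^ ((8⁻¹ : ℝ≥0) : ℝ) * P ν t = Efun ν t := by
  rw [P, Efun, mul_div_assoc' ]
  congr 1
  rw [← mul_assoc, ← NNReal.rpow_add' (by norm_num [NNReal.coe_inv])]
  norm_num [NNReal.coe_inv]
  rw [mul_comm]

/-- (i) pointwise identity used for the approximation step. -/
lemma approx_identity (ν t : ℝ≥0) :
    t + Efun ν t * (t * Efun ν t) = Gfun ν t + (Efun ν t * t + t * Efun ν t) := by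
  rw [Efun, Gfun]
  have h := den_ne (ν * t)
  field_simp
  ring

section Algebra

variable {A : Type*} [NonUnitalCStarAlgebra A] [PartialOrder A] [StarOrderedRing A]

lemma absorb_left {x k : A} (hk : 0 ≤ k) (hxk : x * star x ≤ k)
    {f : ℝ≥0 → ℝ≥0} (hf : Continuous f) (hf0 : f 0 = 0) {C : ℝ≥0}
    (hb : ∀ t ∈ quasispectrum ℝ≥0 k, f t * (t * f t) ≤ C * C) :
    ‖cfcₙ f k * x‖₊ ≤ C := by
  have hF : (0:A) ≤ cfcₙ f k := cfcₙ_predicate f k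
  have hFsa : IsSelfAdjoint (cfcₙ f k) := .of_nonneg hF
  have e2 : cfcₙ f k * k * cfcₙ f k = cfcₙ (fun t => f t * (t * f t)) k := by
    calc cfcₙ f k * k * cfcₙ f k
        = cfcₙ f k * cfcₙ (fun t : ℝ≥0 => t * f t) k := by
          rw [cfcₙ_mul (fun t : ℝ≥0 => t) f k continuous_id.continuousOn rfl
            hf.continuousOn hf0, cfcₙ_id' ℝ≥0 k, mul_assoc]
      _ = cfcₙ (fun t => f t * (t * f t)) k := by
          rw [← cfcₙ_mul f (fun t : ℝ≥0 => t * f t) k hf.continuousOn hf0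
            (continuous_id.mul hf).continuousOn (by simp [hf0])]
  have key : (cfcₙ f k * x) * star (cfcₙ f k * x) ≤ cfcₙ (fun t => f t * (t * f t)) k := by
    rw [← e2]
    have hconj := star_left_conjugate_le_conjugate hxk (cfcₙ f k)
    rw [hFsa.star_eq] at hconj
    calc (cfcₙ f k * x) * star (cfcₙ f k * x)
        = cfcₙ f k * (x * star x) * cfcₙ f k := by
          rw [star_mul, hFsa.star_eq]; simp only [mul_assoc]
      _ ≤ cfcₙ f k * k * cfcₙ f k := by simpa only [mul_assoc] using hconj
  have hsq : ‖cfcₙ f k * x‖₊ * ‖cfcₙ f k * x‖₊ ≤ C * C := by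
    rw [← CStarRing.nnnorm_self_mul_star (x := cfcₙ f k * x)]
    exact le_trans
      (CStarAlgebra.nnnorm_le_nnnorm_of_nonneg_of_le (mul_star_self_nonneg _) key)
      (nnnorm_cfcₙ_nnreal_le hb)
  exact le_of_not_gt fun hlt =>
    absurd hsq (not_le.mpr (mul_lt_mul'' hlt hlt (zero_le ..) (zero_le ..)))

lemma absorb_right {x h : A} (hh : 0 ≤ h) (hxh : star x * x ≤ h)
    {f : ℝ≥0 → ℝ≥0} (hf : Continuous f) (hf0 : f 0 = 0) {C : ℝ≥0}
    (hb : ∀ t ∈ quasispectrum ℝ≥0 h, f t * (t * f t) ≤ C * C) :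
    ‖x * cfcₙ f h‖₊ ≤ C := by
  have hFsa : IsSelfAdjoint (cfcₙ f h) := .of_nonneg (cfcₙ_predicate f h)
  have := absorb_left (x := star x) hh (by simpa using hxh) hf hf0 hb
  calc ‖x * cfcₙ f h‖₊ = ‖star (x * cfcₙ f h)‖₊ := (nnnorm_star _).symm
    _ = ‖cfcₙ f h * star x‖₊ := by rw [star_mul, hFsa.star_eq]
    _ ≤ C := this

lemma quartic {x h k : A} (hh : 0 ≤ h) (hk : 0 ≤ k)
    (hxh : star x * x ≤ h) (hxk : x * star x ≤ k)
    {c d : ℝ≥0 → ℝ≥0} (hc : Continuous c) (hc0 : c 0 = 0) (hd : Continuous d) (hd0 : d 0 = 0)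
    {δ Γ : ℝ≥0}
    (h1 : ∀ t ∈ quasispectrum ℝ≥0 k, c t * (t * c t) ≤ δ * δ)
    (h2 : ∀ t ∈ quasispectrum ℝ≥0 h, (d t * d t) * (t * (d t * d t)) ≤ 1 * 1)
    (h3 : ∀ t ∈ quasispectrum ℝ≥0 k, c t ≤ Γ) :
    ‖cfcₙ c k * x * cfcₙ d h‖₊ * ‖cfcₙ c k * x * cfcₙ d h‖₊ ≤ Γ * δ := by
  set C := cfcₙ c k with hCdef
  set D := cfcₙ d h with hDdef
  have hCsa : IsSelfAdjoint C := .of_nonneg (cfcₙ_predicate c k)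
  have hDsa : IsSelfAdjoint D := .of_nonneg (cfcₙ_predicate d h)
  have hCx : ‖C * x‖₊ ≤ δ := absorb_left hk hxk hc hc0 h1
  have hDD : D * D = cfcₙ (fun t => d t * d t) h := by
    rw [← cfcₙ_mul d d h hd.continuousOn hd0 hd.continuousOn hd0]
  have hD2 : ‖x * (D * D)‖₊ ≤ 1 := by
    rw [hDD]
    exact absorb_right hh hxh (hd.mul hd) (by simp [hd0]) h2
  have hC : ‖C‖₊ ≤ Γ := nnnorm_cfcₙ_nnreal_le h3
  set z := C * x * D with hzdef
  have hzstar : star z = D * star x * C := by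
    rw [hzdef, star_mul, star_mul, hCsa.star_eq, hDsa.star_eq, mul_assoc]
  set V := C * (x * (D * D)) with hVdef
  set M := star x * (C * C) * x with hMdef
  have hVstar : star V = D * D * (star x * C) := by
    simp [hVdef, star_mul, hCsa.star_eq, hDsa.star_eq, mul_assoc]
  have hexp : (z * star z) * (z * star z) = V * M * star V := by
    rw [hzstar, hVstar, hzdef, hVdef, hMdef]
    simp only [mul_assoc]
  have hM : ‖M‖₊ ≤ δ * δ := by
    have : M = star (C * x) * (C * x) := by
      rw [hMdef, star_mul, hCsa.star_eq]; simp only [mul_assoc]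
    rw [this, CStarRing.nnnorm_star_mul_self]
    exact mul_le_mul' hCx hCx
  have hV : ‖V‖₊ ≤ Γ * 1 := le_trans (nnnorm_mul_le _ _) (mul_le_mul' hC hD2)
  have hzsa : IsSelfAdjoint (z * star z) := by
    rw [IsSelfAdjoint, star_mul, star_star]
  have big : (‖z‖₊ * ‖z‖₊) * (‖z‖₊ * ‖z‖₊) ≤ (Γ * δ) * (Γ * δ) := by
    calc (‖z‖₊ * ‖z‖₊) * (‖z‖₊ * ‖z‖₊)
        = ‖z * star z‖₊ * ‖z * star z‖₊ := by rw [CStarRing.nnnorm_self_mul_star]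
      _ = ‖(z * star z) * (z * star z)‖₊ := by
          rw [show (z * star z) * (z * star z) = star (z * star z) * (z * star z) from by
            rw [hzsa.star_eq], CStarRing.nnnorm_star_mul_self]
      _ = ‖V * M * star V‖₊ := by rw [hexp]
      _ ≤ ‖V * M‖₊ * ‖star V‖₊ := nnnorm_mul_le _ _
      _ ≤ ‖V‖₊ * ‖M‖₊ * ‖star V‖₊ := mul_le_mul_left (nnnorm_mul_le _ _) _
      _ = ‖V‖₊ * ‖M‖₊ * ‖V‖₊ := by rw [nnnorm_star]
      _ ≤ (Γ * 1) * (δ * δ) * (Γ * 1) := by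
          exact mul_le_mul' (mul_le_mul' hV hM) hV
      _ = (Γ * δ) * (Γ * δ) := by ring
  exact le_of_not_gt fun hlt =>
    absurd big (not_le.mpr (mul_lt_mul'' hlt hlt (zero_le ..) (zero_le ..)))

lemma approx_left {x k : A} (hk : 0 ≤ k) (hxk : x * star x ≤ k) {ν : ℝ≥0} (hν : 1 ≤ ν) :
    ‖x - cfcₙ (Efun ν) k * x‖₊ * ‖x - cfcₙ (Efun ν) k * x‖₊ ≤ ν⁻¹ := by
  set E := cfcₙ (Efun ν) k with hEdef
  have hEsa : IsSelfAdjoint E := .of_nonneg (cfcₙ_predicate _ k)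
  have cE : Continuous (Efun ν) := continuous_E ν
  have c1 : cfcₙ (fun t : ℝ≥0 => t * Efun ν t) k = k * E := by
    rw [cfcₙ_mul (fun t : ℝ≥0 => t) (Efun ν) k continuous_id.continuousOn rfl
      cE.continuousOn (E_zero ν), cfcₙ_id' ℝ≥0 k]
  have c2 : cfcₙ (fun t => Efun ν t * (t * Efun ν t)) k = E * (k * E) := by
    rw [cfcₙ_mul (Efun ν) (fun t : ℝ≥0 => t * Efun ν t) k cE.continuousOn (E_zero ν)
      (continuous_id.mul cE).continuousOn (by simp), c1]
  have c3 : cfcₙ (fun t => Efun ν t * t) k = E * k := by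
    rw [cfcₙ_mul (Efun ν) (fun t : ℝ≥0 => t) k cE.continuousOn (E_zero ν)
      continuous_id.continuousOn rfl, cfcₙ_id' ℝ≥0 k]
  have c4 : cfcₙ (fun t : ℝ≥0 => t + Efun ν t * (t * Efun ν t)) k = k + E * (k * E) := by
    rw [cfcₙ_add (fun t : ℝ≥0 => t) (fun t => Efun ν t * (t * Efun ν t)) k
      continuous_id.continuousOn rfl (cE.mul (continuous_id.mul cE)).continuousOn (by simp),
      cfcₙ_id' ℝ≥0 k, c2]
  have c5 : cfcₙ (fun t => Gfun ν t + (Efun ν t * t + t * Efun ν t)) k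
      = cfcₙ (Gfun ν) k + (E * k + k * E) := by
    rw [cfcₙ_add (Gfun ν) (fun t => Efun ν t * t + t * Efun ν t) k
      (continuous_G ν).continuousOn (G_zero ν)
      ((cE.mul continuous_id).add (continuous_id.mul cE)).continuousOn (by simp),
      cfcₙ_add (fun t => Efun ν t * t) (fun t : ℝ≥0 => t * Efun ν t) k
      (cE.mul continuous_id).continuousOn (by simp)
      (continuous_id.mul cE).continuousOn (by simp), c1, c3]
  have hiden : cfcₙ (Gfun ν) k = k + E * (k * E) - (E * k + k * E) := by
    refine eq_sub_of_add_eq ?_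
    rw [← c5, ← c4]
    exact cfcₙ_congr (f := fun t => Gfun ν t + (Efun ν t * t + t * Efun ν t))
      (g := fun t : ℝ≥0 => t + Efun ν t * (t * Efun ν t)) (a := k)
      fun t _ => (approx_identity ν t).symm
  have hw : (0:A) ≤ k - x * star x := sub_nonneg.mpr hxk
  set s := CFC.sqrt (k - x * star x) with hsdef
  have hs : s * s = k - x * star x := CFC.sqrt_mul_sqrt_self (k - x * star x) hw
  have hssa : IsSelfAdjoint s := .of_nonneg (CFC.sqrt_nonneg (a := k - x * star x))
  have expand : cfcₙ (Gfun ν) k - (x - E * x) * star (x - E * x)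
      = star (s - s * E) * (s - s * E) := by
    have h1 : star (s - s * E) * (s - s * E)
        = (s * s) - (s * s) * E - E * (s * s) + E * ((s * s) * E) := by
      rw [star_sub, star_mul, hssa.star_eq, hEsa.star_eq]
      noncomm_ring
    rw [h1, hs, hiden, star_sub, star_mul, hEsa.star_eq]
    noncomm_ring
  have key : (x - E * x) * star (x - E * x) ≤ cfcₙ (Gfun ν) k := by
    have h0 : (0:A) ≤ cfcₙ (Gfun ν) k - (x - E * x) * star (x - E * x) := by
      rw [expand]; exact star_mul_self_nonneg _
    exact sub_nonneg.mp h0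
  calc ‖x - E * x‖₊ * ‖x - E * x‖₊
      = ‖(x - E * x) * star (x - E * x)‖₊ := (CStarRing.nnnorm_self_mul_star).symm
    _ ≤ ‖cfcₙ (Gfun ν) k‖₊ :=
        CStarAlgebra.nnnorm_le_nnnorm_of_nonneg_of_le (mul_star_self_nonneg _) key
    _ ≤ ν⁻¹ := nnnorm_cfcₙ_nnreal_le fun t _ => G_le hν t

lemma approx_right {x h : A} (hh : 0 ≤ h) (hxh : star x * x ≤ h) {ν : ℝ≥0} (hν : 1 ≤ ν) :
    ‖x - x * cfcₙ (Efun ν) h‖₊ * ‖x - x * cfcₙ (Efun ν) h‖₊ ≤ ν⁻¹ := by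
  have hEsa : IsSelfAdjoint (cfcₙ (Efun ν) h) := .of_nonneg (cfcₙ_predicate _ h)
  have heq : ‖x - x * cfcₙ (Efun ν) h‖₊ = ‖star x - cfcₙ (Efun ν) h * star x‖₊ := by
    rw [← nnnorm_star, star_sub, star_mul, hEsa.star_eq]
  rw [heq]
  exact approx_left hh (by simpa using hxh) hν

end Algebra

lemma le_of_mul_self_le_mul_self {a b : ℝ≥0} (hle : a * a ≤ b * b) : a ≤ b :=
  le_of_not_gt fun hlt => absurd hle (not_le.mpr (mul_lt_mul'' hlt hlt (zero_le ..) (zero_le ..)))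

end Stmt14Aux

open Stmt14Aux in
/-- If `h` and `k` are positive contractions in a C*-algebra `A` and
`x ∈ A` satisfies `x*x ≤ h - h²` and `xx* ≤ k - k²`, then `x` factors as
`x = k^{1/8} y h^{1/8}` for some `y ∈ A`. -/
theorem stmt14 {A : Type*} [NonUnitalCStarAlgebra A] [PartialOrder A] [StarOrderedRing A]
    (x h k : A) (hh : 0 ≤ h) (hh1 : ‖h‖ ≤ 1) (hk : 0 ≤ k) (hk1 : ‖k‖ ≤ 1)
    (hx1 : star x * x ≤ h - h * h) (hx2 : x * star x ≤ k - k * k) :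
    ∃ y : A, x = CFC.nnrpow k (8⁻¹ : ℝ≥0) * y * CFC.nnrpow h (8⁻¹ : ℝ≥0) := by
  classical
  -- basic consequences of the hypotheses
  have hsub : ∀ a : A, 0 ≤ a → a - a * a ≤ a := by
    intro a ha
    have h0 : (0:A) ≤ a * a := by
      have h1 := star_mul_self_nonneg a
      rwa [(IsSelfAdjoint.of_nonneg ha).star_eq] at h1
    exact sub_le_self a h0
  have hh' : star x * x ≤ h := hx1.trans (hsub h hh)
  have hk' : x * star x ≤ k := hx2.trans (hsub k hk)
  have Sσ : ∀ a : A, 0 ≤ a → ‖a‖ ≤ 1 → ∀ t ∈ quasispectrum ℝ≥0 a, t ≤ 1 := by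
    intro a ha ha1 t ht
    have h1 : t ≤ ‖cfcₙ (id : ℝ≥0 → ℝ≥0) a‖₊ :=
      apply_le_nnnorm_cfcₙ_nnreal id a ht continuous_id.continuousOn rfl ha
    rw [cfcₙ_id ℝ≥0 a] at h1
    refine h1.trans ?_
    rw [← NNReal.coe_le_coe, coe_nnnorm, NNReal.coe_one]
    exact ha1
  have Sh := Sσ h hh hh1
  have Sk := Sσ k hk hk1
  -- the scale sequence
  set ν : ℕ → ℝ≥0 := fun j => 2 ^ j with hνdef
  have hν1 : ∀ j, 1 ≤ ν j := fun j => one_le_pow₀ one_le_two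
  have hν0 : ∀ j, ν j ≠ 0 := fun j => pow_ne_zero j two_ne_zero
  have hν2 : ∀ j, ν (j + 1) = 2 * ν j := fun j => pow_succ' 2 j
  -- decay rates
  set ρ : ℝ≥0 := 2 ^ (-(8:ℝ)⁻¹) with hρdef
  have hρ1 : ρ < 1 := NNReal.rpow_lt_one_of_one_lt_of_neg one_lt_two (by norm_num)
  have hρj : ∀ j, (ν j) ^ (-(8:ℝ)⁻¹) = ρ ^ j := by
    intro j
    rw [hνdef, hρdef]
    rw [← NNReal.rpow_natCast_mul 2 j (-(8:ℝ)⁻¹), mul_comm ((j:ℝ)) _,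
      NNReal.rpow_mul_natCast]
  set s : ℝ≥0 := NNReal.sqrt 2⁻¹ with hsdef
  have hs1 : s < 1 := by
    rw [hsdef, show (1:ℝ≥0) = NNReal.sqrt 1 by simp]
    exact NNReal.sqrt_lt_sqrt.mpr (by rw [← NNReal.coe_lt_coe]; norm_num)
  have hsinv : ∀ j, (ν j)⁻¹ = s ^ j * s ^ j := by
    intro j
    rw [hνdef, hsdef, ← mul_pow, NNReal.mul_self_sqrt, ← inv_pow]
  -- the approximating sequence
  set Y : ℕ → A := fun j => cfcₙ (P (ν j)) k * x * cfcₙ (P (ν j)) h with hYdef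
  have hYj : ∀ j, Y j = cfcₙ (P (ν j)) k * x * cfcₙ (P (ν j)) h := fun j => rfl
  have hsplit : ∀ (a : A), 0 ≤ a → ∀ j,
      cfcₙ (P (ν (j+1))) a = cfcₙ (P (ν j)) a + cfcₙ (Q (ν j)) a := by
    intro a ha j
    rw [← cfcₙ_add (P (ν j)) (Q (ν j)) a (continuous_P _).continuousOn (P_zero _)
      (continuous_Q _).continuousOn (Q_zero _)]
    exact cfcₙ_congr fun t _ => by rw [hν2 j]; exact (P_add_Q (ν j) t).symm
  -- geometric bound on the differences
  have hdiff : ∀ j, ‖Y (j+1) - Y j‖₊ ≤ 4 * ρ ^ j := by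
    intro j
    have hYd : Y (j+1) - Y j
        = cfcₙ (Q (ν j)) k * x * cfcₙ (P (ν (j+1))) h
          + cfcₙ (P (ν j)) k * x * cfcₙ (Q (ν j)) h := by
      rw [hYj, hYj, hsplit k hk j, hsplit h hh j]
      noncomm_ring
    have hδδ : (ν j) ^ (-(3/8) : ℝ) * (ν j) ^ (-(3/8) : ℝ) = (ν j) ^ (-(3/4) : ℝ) := by
      rw [← NNReal.rpow_add (hν0 j)]; norm_num
    have h1k : ∀ t ∈ quasispectrum ℝ≥0 k, Q (ν j) t * (t * Q (ν j) t)
        ≤ (ν j) ^ (-(3/8) : ℝ) * (ν j) ^ (-(3/8) : ℝ) := by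
      intro t ht
      rw [hδδ, show Q (ν j) t * (t * Q (ν j) t) = Q (ν j) t * Q (ν j) t * t by ring]
      exact Q_sq_mul_le (hν1 j) (Sk t ht)
    have h1h : ∀ t ∈ quasispectrum ℝ≥0 h, Q (ν j) t * (t * Q (ν j) t)
        ≤ (ν j) ^ (-(3/8) : ℝ) * (ν j) ^ (-(3/8) : ℝ) := by
      intro t ht
      rw [hδδ, show Q (ν j) t * (t * Q (ν j) t) = Q (ν j) t * Q (ν j) t * t by ring]
      exact Q_sq_mul_le (hν1 j) (Sh t ht)
    have h2h : ∀ m, ∀ t ∈ quasispectrum ℝ≥0 h, (P (ν m) t * P (ν m) t)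
        * (t * (P (ν m) t * P (ν m) t)) ≤ 1 * 1 := by
      intro m t ht
      rw [show (P (ν m) t * P (ν m) t) * (t * (P (ν m) t * P (ν m) t))
        = P (ν m) t * P (ν m) t * (P (ν m) t * P (ν m) t) * t by ring, one_mul]
      exact P_sq_sq_mul_le (Sh t ht)
    have h2k : ∀ m, ∀ t ∈ quasispectrum ℝ≥0 k, (P (ν m) t * P (ν m) t)
        * (t * (P (ν m) t * P (ν m) t)) ≤ 1 * 1 := by
      intro m t ht
      rw [show (P (ν m) t * P (ν m) t) * (t * (P (ν m) t * P (ν m) t))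
        = P (ν m) t * P (ν m) t * (P (ν m) t * P (ν m) t) * t by ring, one_mul]
      exact P_sq_sq_mul_le (Sk t ht)
    have h3k : ∀ t ∈ quasispectrum ℝ≥0 k, Q (ν j) t ≤ (2 * ν j) ^ ((8:ℝ)⁻¹) :=
      fun t _ => (Q_le_P (ν j) t).trans (P_le (2 * ν j) t)
    have h3h : ∀ t ∈ quasispectrum ℝ≥0 h, Q (ν j) t ≤ (2 * ν j) ^ ((8:ℝ)⁻¹) :=
      fun t _ => (Q_le_P (ν j) t).trans (P_le (2 * ν j) t)
    have hA : ‖cfcₙ (Q (ν j)) k * x * cfcₙ (P (ν (j+1))) h‖₊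
        * ‖cfcₙ (Q (ν j)) k * x * cfcₙ (P (ν (j+1))) h‖₊
        ≤ (2 * ν j) ^ ((8:ℝ)⁻¹) * (ν j) ^ (-(3/8) : ℝ) :=
      quartic hh hk hh' hk' (continuous_Q _) (Q_zero _) (continuous_P _) (P_zero _)
        h1k (h2h (j+1)) h3k
    have hBs : ‖cfcₙ (P (ν j)) k * x * cfcₙ (Q (ν j)) h‖₊
        = ‖cfcₙ (Q (ν j)) h * star x * cfcₙ (P (ν j)) k‖₊ := by
      have hPsa : IsSelfAdjoint (cfcₙ (P (ν j)) k) := .of_nonneg (cfcₙ_predicate _ k)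
      have hQsa : IsSelfAdjoint (cfcₙ (Q (ν j)) h) := .of_nonneg (cfcₙ_predicate _ h)
      rw [← nnnorm_star, star_mul, star_mul, hPsa.star_eq, hQsa.star_eq, mul_assoc]
    have hB : ‖cfcₙ (P (ν j)) k * x * cfcₙ (Q (ν j)) h‖₊
        * ‖cfcₙ (P (ν j)) k * x * cfcₙ (Q (ν j)) h‖₊
        ≤ (2 * ν j) ^ ((8:ℝ)⁻¹) * (ν j) ^ (-(3/8) : ℝ) := by
      rw [hBs]
      exact quartic (x := star x) hk hh (by simpa using hk') (by simpa using hh')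
        (continuous_Q _) (Q_zero _) (continuous_P _) (P_zero _)
        h1h (h2k j) h3h
    have num : (2 * ν j) ^ ((8:ℝ)⁻¹) * (ν j) ^ (-(3/8) : ℝ) ≤ (2 * ρ ^ j) * (2 * ρ ^ j) := by
      calc (2 * ν j) ^ ((8:ℝ)⁻¹) * (ν j) ^ (-(3/8) : ℝ)
          = 2 ^ ((8:ℝ)⁻¹) * ((ν j) ^ ((8:ℝ)⁻¹) * (ν j) ^ (-(3/8) : ℝ)) := by
            rw [NNReal.mul_rpow]; ring
        _ = 2 ^ ((8:ℝ)⁻¹) * ((ν j) ^ (-(8:ℝ)⁻¹) * (ν j) ^ (-(8:ℝ)⁻¹)) := by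
            rw [← NNReal.rpow_add (hν0 j), ← NNReal.rpow_add (hν0 j)]; norm_num
        _ ≤ 4 * ((ν j) ^ (-(8:ℝ)⁻¹) * (ν j) ^ (-(8:ℝ)⁻¹)) := by
            gcongr
            calc (2:ℝ≥0) ^ ((8:ℝ)⁻¹) ≤ 2 ^ (1:ℝ) :=
                  NNReal.rpow_le_rpow_of_exponent_le one_le_two (by norm_num)
              _ = 2 := NNReal.rpow_one 2
              _ ≤ 4 := by norm_num
        _ = (2 * ρ ^ j) * (2 * ρ ^ j) := by rw [hρj]; ring
    have hA' : ‖cfcₙ (Q (ν j)) k * x * cfcₙ (P (ν (j+1))) h‖₊ ≤ 2 * ρ ^ j :=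
      le_of_mul_self_le_mul_self (hA.trans num)
    have hB' : ‖cfcₙ (P (ν j)) k * x * cfcₙ (Q (ν j)) h‖₊ ≤ 2 * ρ ^ j :=
      le_of_mul_self_le_mul_self (hB.trans num)
    calc ‖Y (j+1) - Y j‖₊
        = ‖cfcₙ (Q (ν j)) k * x * cfcₙ (P (ν (j+1))) h
            + cfcₙ (P (ν j)) k * x * cfcₙ (Q (ν j)) h‖₊ := by rw [hYd]
      _ ≤ ‖cfcₙ (Q (ν j)) k * x * cfcₙ (P (ν (j+1))) h‖₊
            + ‖cfcₙ (P (ν j)) k * x * cfcₙ (Q (ν j)) h‖₊ := nnnorm_add_le _ _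
      _ ≤ 2 * ρ ^ j + 2 * ρ ^ j := add_le_add hA' hB'
      _ = 4 * ρ ^ j := by ring
  -- approximation of x
  have happrox : ∀ j, ‖x - cfcₙ (Efun (ν j)) k * x * cfcₙ (Efun (ν j)) h‖₊ ≤ 2 * s ^ j := by
    intro j
    have h1 : ‖x - cfcₙ (Efun (ν j)) k * x‖₊ ≤ s ^ j :=
      le_of_mul_self_le_mul_self (by
        rw [← hsinv j]; exact approx_left hk hk' (hν1 j))
    have h2 : ‖x - x * cfcₙ (Efun (ν j)) h‖₊ ≤ s ^ j :=
      le_of_mul_self_le_mul_self (by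
        rw [← hsinv j]; exact approx_right hh hh' (hν1 j))
    have hE : ‖cfcₙ (Efun (ν j)) k‖₊ ≤ 1 := nnnorm_cfcₙ_nnreal_le fun t _ => E_le_one _ t
    calc ‖x - cfcₙ (Efun (ν j)) k * x * cfcₙ (Efun (ν j)) h‖₊
        = ‖(x - cfcₙ (Efun (ν j)) k * x)
            + cfcₙ (Efun (ν j)) k * (x - x * cfcₙ (Efun (ν j)) h)‖₊ := by
          congr 1; noncomm_ring
      _ ≤ ‖x - cfcₙ (Efun (ν j)) k * x‖₊
            + ‖cfcₙ (Efun (ν j)) k * (x - x * cfcₙ (Efun (ν j)) h)‖₊ := nnnorm_add_le _ _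
      _ ≤ s ^ j + 1 * s ^ j :=
          add_le_add h1 (le_trans (nnnorm_mul_le _ _) (mul_le_mul' hE h2))
      _ = 2 * s ^ j := by ring
  -- the key identity
  have hcont8 : Continuous (fun t : ℝ≥0 => NNReal.nnrpow t (8⁻¹:ℝ≥0)) := by
    simp only [NNReal.nnrpow_def]
    exact NNReal.continuous_rpow_const (by positivity)
  have hz8 : NNReal.nnrpow (0:ℝ≥0) (8⁻¹:ℝ≥0) = 0 := by
    rw [NNReal.nnrpow_def]
    exact NNReal.zero_rpow (by norm_num)
  have hid : ∀ j, CFC.nnrpow k (8⁻¹:ℝ≥0) * Y j * CFC.nnrpow h (8⁻¹:ℝ≥0)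
      = cfcₙ (Efun (ν j)) k * x * cfcₙ (Efun (ν j)) h := by
    intro j
    have hl : CFC.nnrpow k (8⁻¹:ℝ≥0) * cfcₙ (P (ν j)) k = cfcₙ (Efun (ν j)) k := by
      rw [show CFC.nnrpow k (8⁻¹:ℝ≥0)
          = cfcₙ (fun t : ℝ≥0 => NNReal.nnrpow t (8⁻¹:ℝ≥0)) k from rfl,
        ← cfcₙ_mul (fun t : ℝ≥0 => NNReal.nnrpow t (8⁻¹:ℝ≥0)) (P (ν j)) k
          hcont8.continuousOn hz8 (continuous_P _).continuousOn (P_zero _)]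
      exact cfcₙ_congr fun t _ => by
        simp only [NNReal.nnrpow_def]
        exact rpow_mul_P (ν j) t
    have hr : cfcₙ (P (ν j)) h * CFC.nnrpow h (8⁻¹:ℝ≥0) = cfcₙ (Efun (ν j)) h := by
      rw [show CFC.nnrpow h (8⁻¹:ℝ≥0)
          = cfcₙ (fun t : ℝ≥0 => NNReal.nnrpow t (8⁻¹:ℝ≥0)) h from rfl,
        ← cfcₙ_mul (P (ν j)) (fun t : ℝ≥0 => NNReal.nnrpow t (8⁻¹:ℝ≥0)) h
          (continuous_P _).continuousOn (P_zero _) hcont8.continuousOn hz8]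
      exact cfcₙ_congr fun t _ => by
        simp only [NNReal.nnrpow_def]
        rw [mul_comm]
        exact rpow_mul_P (ν j) t
    calc CFC.nnrpow k (8⁻¹:ℝ≥0) * Y j * CFC.nnrpow h (8⁻¹:ℝ≥0)
        = (CFC.nnrpow k (8⁻¹:ℝ≥0) * cfcₙ (P (ν j)) k) * x
            * (cfcₙ (P (ν j)) h * CFC.nnrpow h (8⁻¹:ℝ≥0)) := by
          rw [hYj]; noncomm_ring
      _ = cfcₙ (Efun (ν j)) k * x * cfcₙ (Efun (ν j)) h := by rw [hl, hr]
  -- convergence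
  have hcauchy : CauchySeq Y := by
    refine cauchySeq_of_le_geometric (ρ:ℝ) 4 (by exact_mod_cast hρ1) fun n => ?_
    rw [dist_eq_norm, norm_sub_rev, ← coe_nnnorm]
    calc (‖Y (n+1) - Y n‖₊ : ℝ) ≤ ((4 * ρ ^ n : ℝ≥0) : ℝ) := by exact_mod_cast hdiff n
      _ = 4 * (ρ:ℝ) ^ n := by push_cast; ring
  obtain ⟨y, hy⟩ := cauchySeq_tendsto_of_complete hcauchy
  refine ⟨y, ?_⟩
  have T1 : Filter.Tendsto (fun j => CFC.nnrpow k (8⁻¹:ℝ≥0) * Y j * CFC.nnrpow h (8⁻¹:ℝ≥0))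
      Filter.atTop (nhds (CFC.nnrpow k (8⁻¹:ℝ≥0) * y * CFC.nnrpow h (8⁻¹:ℝ≥0))) :=
    (hy.const_mul _).mul_const _
  have T2 : Filter.Tendsto (fun j => CFC.nnrpow k (8⁻¹:ℝ≥0) * Y j * CFC.nnrpow h (8⁻¹:ℝ≥0))
      Filter.atTop (nhds x) := by
    rw [show (fun j => CFC.nnrpow k (8⁻¹:ℝ≥0) * Y j * CFC.nnrpow h (8⁻¹:ℝ≥0))
        = fun j => cfcₙ (Efun (ν j)) k * x * cfcₙ (Efun (ν j)) h from funext hid]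
    rw [← tendsto_sub_nhds_zero_iff]
    refine squeeze_zero_norm (a := fun j => 2 * (s:ℝ) ^ j) (fun j => ?_) ?_
    · rw [norm_sub_rev, ← coe_nnnorm]
      calc (‖x - cfcₙ (Efun (ν j)) k * x * cfcₙ (Efun (ν j)) h‖₊ : ℝ)
          ≤ ((2 * s ^ j : ℝ≥0) : ℝ) := by exact_mod_cast happrox j
        _ = 2 * (s:ℝ) ^ j := by push_cast; ring
    · simpa using (tendsto_pow_atTop_nhds_zero_of_lt_one s.coe_nonneg
        (by exact_mod_cast hs1)).const_mul 2
  exact tendsto_nhds_unique T2 T1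
end
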